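/- arXiv:2601.07326 — 5 statements merged into one kernel-verified Lean document; each statement's English description precedes it below -/
import Mathlib

section
/- For symmetric positive semidefinite matrices X, Y ∈ R^{m×m}, tr((X+Y)^{1/2}) ≤ tr(X^{1/2}) + tr(Y^{1/2}). -/
open Matrix BigOperators

noncomputable section

namespace Paper

/-- Matrix real power of a symmetric matrix via spectral decomposition
(junk value `0` if the matrix is not hermitian). -/
def mrpow {m : ℕ} (X : Matrix (Fin m) (Fin m) ℝ) (t : ℝ) : Matrix (Fin m) (Fin m) ℝ :=
  if h : X.IsHermitian then
    (Matrix.IsHermitian.eigenvectorUnitary h : Matrix (Fin m) (Fin m) ℝ) *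
      Matrix.diagonal (fun i => (h.eigenvalues i) ^ t) *
      star (Matrix.IsHermitian.eigenvectorUnitary h : Matrix (Fin m) (Fin m) ℝ)
  else 0

/-- Singular values of a rectangular real matrix, as the square roots of the
eigenvalues of `Aᴴ * A` (listed with multiplicity, indexed by `Fin n`). -/
def singVals {m n : ℕ} (A : Matrix (Fin m) (Fin n) ℝ) : Fin n → ℝ :=
  fun i => Real.sqrt ((Matrix.isHermitian_conjTranspose_mul_self A).eigenvalues i)

/-- Nuclear norm: sum of singular values. -/
def nuclearNorm {m n : ℕ} (A : Matrix (Fin m) (Fin n) ℝ) : ℝ :=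
  ∑ i, singVals A i

/-- Frobenius norm. -/
def frobNorm {m n : ℕ} (A : Matrix (Fin m) (Fin n) ℝ) : ℝ :=
  Real.sqrt ((Aᴴ * A).trace)

/-- Spectral norm: largest singular value. -/
def opNorm {m n : ℕ} (A : Matrix (Fin m) (Fin n) ℝ) : ℝ :=
  ⨆ i, singVals A i

/-- Schatten-`p` norm for finite `p`. -/
def schattenNorm {m n : ℕ} (p : ℝ) (A : Matrix (Fin m) (Fin n) ℝ) : ℝ :=
  (∑ i, (singVals A i) ^ p) ^ (1 / p)

section Aux

variable {m : ℕ}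

noncomputable def _root_.Matrix.PosSemidef.sqrt {A : Matrix (Fin m) (Fin m) ℝ} (hA : A.PosSemidef) :
    Matrix (Fin m) (Fin m) ℝ :=
  (hA.1.eigenvectorUnitary : Matrix (Fin m) (Fin m) ℝ) *
    Matrix.diagonal ((↑) ∘ Real.sqrt ∘ hA.1.eigenvalues) *
    star (hA.1.eigenvectorUnitary : Matrix (Fin m) (Fin m) ℝ)

lemma _root_.Matrix.PosSemidef.posSemidef_sqrt {A : Matrix (Fin m) (Fin m) ℝ}
    (hA : A.PosSemidef) : hA.sqrt.PosSemidef := by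
  unfold Matrix.PosSemidef.sqrt
  have h := (Matrix.PosSemidef.diagonal (n := Fin m) (R := ℝ)
    (d := ((↑) ∘ Real.sqrt ∘ hA.1.eigenvalues)) (fun i => by simp [Real.sqrt_nonneg])).mul_mul_conjTranspose_same
    (hA.1.eigenvectorUnitary : Matrix (Fin m) (Fin m) ℝ)
  simpa [Matrix.star_eq_conjTranspose] using h

lemma _root_.Matrix.PosSemidef.sqrt_mul_self {A : Matrix (Fin m) (Fin m) ℝ}
    (hA : A.PosSemidef) : hA.sqrt * hA.sqrt = A := by
  unfold Matrix.PosSemidef.sqrt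
  set U := (hA.1.eigenvectorUnitary : Matrix (Fin m) (Fin m) ℝ)
  have hU : star U * U = 1 := Unitary.coe_star_mul_self _
  conv_rhs => rw [hA.1.spectral_theorem, Unitary.conjStarAlgAut_apply]
  have hd : diagonal ((↑) ∘ Real.sqrt ∘ hA.1.eigenvalues) * diagonal ((↑) ∘ Real.sqrt ∘ hA.1.eigenvalues)
      = diagonal (RCLike.ofReal ∘ hA.1.eigenvalues : Fin m → ℝ) := by
    rw [diagonal_mul_diagonal]; congr 1; funext i
    simp [Real.mul_self_sqrt (hA.eigenvalues_nonneg i)]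
  calc U * diagonal ((↑) ∘ Real.sqrt ∘ hA.1.eigenvalues) * star U *
        (U * diagonal ((↑) ∘ Real.sqrt ∘ hA.1.eigenvalues) * star U)
      = U * (diagonal ((↑) ∘ Real.sqrt ∘ hA.1.eigenvalues) * (star U * U) *
        diagonal ((↑) ∘ Real.sqrt ∘ hA.1.eigenvalues)) * star U := by noncomm_ring
    _ = _ := by rw [hU, mul_one, hd]


private lemma trace_nonneg_of_psd {M : Matrix (Fin m) (Fin m) ℝ} (hM : M.PosSemidef) :
    0 ≤ M.trace := by
  rw [Matrix.trace]
  refine Finset.sum_nonneg fun i _ => ?_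
  have h := hM.2 (Finsupp.single i 1)
  simpa [dotProduct, Matrix.mulVec, Pi.single_apply, Matrix.diag,
    Finset.sum_ite_eq, Finset.sum_ite_eq'] using h

private lemma trace_mul_nonneg {P M : Matrix (Fin m) (Fin m) ℝ}
    (hP : P.PosSemidef) (hM : M.PosSemidef) : 0 ≤ (P * M).trace := by
  have hR := hP.posSemidef_sqrt
  have hconj : (hP.sqrt * M * hP.sqrt).PosSemidef := by
    have := hM.mul_mul_conjTranspose_same hP.sqrt
    rwa [hR.1.eq] at this
  have e : (hP.sqrt * M * hP.sqrt).trace = (P * M).trace := by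
    rw [Matrix.trace_mul_cycle, hP.sqrt_mul_self]
  rw [← e]
  exact trace_nonneg_of_psd hconj

private lemma trace_le_of_psd_sub {A B : Matrix (Fin m) (Fin m) ℝ}
    (h : (B - A).PosSemidef) : A.trace ≤ B.trace := by
  have h0 := trace_nonneg_of_psd h
  rw [Matrix.trace_sub] at h0
  linarith

private lemma sqrt_det_isUnit {P : Matrix (Fin m) (Fin m) ℝ} (hP : P.PosDef) :
    IsUnit (hP.posSemidef.sqrt).det := by
  have h : hP.posSemidef.sqrt * hP.posSemidef.sqrt = P := hP.posSemidef.sqrt_mul_self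
  have hdet : (hP.posSemidef.sqrt).det * (hP.posSemidef.sqrt).det = P.det := by
    rw [← Matrix.det_mul, h]
  have hd := hP.det_pos
  refine isUnit_iff_ne_zero.mpr fun h0 => ?_
  rw [h0, mul_zero] at hdet
  exact absurd hdet.symm (ne_of_gt hd)

/-- Löwner antitonicity of the inverse on positive definite matrices. -/
private lemma inv_sub_inv_psd {P Q : Matrix (Fin m) (Fin m) ℝ}
    (hP : P.PosDef) (hQ : Q.PosDef) (hPQ : (Q - P).PosSemidef) :
    (P⁻¹ - Q⁻¹).PosSemidef := by
  set R := hP.posSemidef.sqrt with hRdef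
  have hR : R.PosSemidef := hP.posSemidef.posSemidef_sqrt
  have hRR : R * R = P := hP.posSemidef.sqrt_mul_self
  have hRu : IsUnit R.det := sqrt_det_isUnit hP
  have hRiR : R⁻¹ * R = 1 := Matrix.nonsing_inv_mul R hRu
  have hRRi : R * R⁻¹ = 1 := Matrix.mul_nonsing_inv R hRu
  have hRinvH : (R⁻¹).IsHermitian := hR.1.inv
  set M := R⁻¹ * Q * R⁻¹ with hMdef
  have hM1 : (M - 1).PosSemidef := by
    have hc := hPQ.mul_mul_conjTranspose_same R⁻¹
    rw [hRinvH.eq] at hc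
    have he : R⁻¹ * (Q - P) * R⁻¹ = M - 1 := by
      have h1 : R⁻¹ * P * R⁻¹ = 1 := by
        rw [← hRR, ← Matrix.mul_assoc, Matrix.mul_assoc (R⁻¹ * R), hRiR, one_mul, hRRi]
      rw [Matrix.mul_sub, Matrix.sub_mul, h1, hMdef]
    rwa [he] at hc
  have hMPD : M.PosDef := by
    have h1 : ((1 : Matrix (Fin m) (Fin m) ℝ) + (M - 1)).PosDef :=
      Matrix.PosDef.add_posSemidef Matrix.PosDef.one hM1
    have : (1 : Matrix (Fin m) (Fin m) ℝ) + (M - 1) = M := by abel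
    rwa [this] at h1
  have hMu : IsUnit M.det := Matrix.isUnit_iff_isUnit_det M |>.mp hMPD.isUnit
  have hMiM : M⁻¹ * M = 1 := Matrix.nonsing_inv_mul M hMu
  have hMMi : M * M⁻¹ = 1 := Matrix.mul_nonsing_inv M hMu
  have hMinv : (M⁻¹).PosDef := hMPD.inv
  set W := hMinv.posSemidef.sqrt with hWdef
  have hW : W.PosSemidef := hMinv.posSemidef.posSemidef_sqrt
  have hWW : W * W = M⁻¹ := hMinv.posSemidef.sqrt_mul_self
  have hcomm : M * W = W * M := by
    have h1 : W * M⁻¹ = M⁻¹ * W := by rw [← hWW, Matrix.mul_assoc]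
    calc M * W = M * W * (M⁻¹ * M) := by rw [hMiM, mul_one]
      _ = M * (W * M⁻¹) * M := by noncomm_ring
      _ = M * (M⁻¹ * W) * M := by rw [h1]
      _ = (M * M⁻¹) * (W * M) := by noncomm_ring
      _ = W * M := by rw [hMMi, one_mul]
  have hIMinv : ((1 : Matrix (Fin m) (Fin m) ℝ) - M⁻¹).PosSemidef := by
    have hc := hM1.mul_mul_conjTranspose_same W
    rw [hW.1.eq] at hc
    have he : W * (M - 1) * W = 1 - M⁻¹ := by
      have h2 : W * M * W = 1 := by
        rw [← hcomm, Matrix.mul_assoc, hWW, hMMi]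
      rw [Matrix.mul_sub, Matrix.sub_mul, mul_one, h2, hWW]
    rwa [he] at hc
  have hfin := hIMinv.mul_mul_conjTranspose_same R⁻¹
  rw [hRinvH.eq] at hfin
  have he2 : R⁻¹ * ((1 : Matrix (Fin m) (Fin m) ℝ) - M⁻¹) * R⁻¹ = P⁻¹ - Q⁻¹ := by
    have hMinvEq : M⁻¹ = R * Q⁻¹ * R := by
      rw [hMdef, Matrix.mul_inv_rev, Matrix.mul_inv_rev,
        Matrix.nonsing_inv_nonsing_inv R hRu, Matrix.mul_assoc]
    have hPinv : P⁻¹ = R⁻¹ * R⁻¹ := by rw [← hRR, Matrix.mul_inv_rev]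
    rw [hMinvEq, Matrix.mul_sub, Matrix.sub_mul, mul_one, hPinv]
    congr 1
    calc R⁻¹ * (R * Q⁻¹ * R) * R⁻¹
        = (R⁻¹ * R) * Q⁻¹ * (R * R⁻¹) := by noncomm_ring
      _ = Q⁻¹ := by rw [hRiR, hRRi, one_mul, mul_one]
  rwa [he2] at hfin

private lemma smul_one_posDef {ε : ℝ} (hε : 0 < ε) :
    (ε • (1 : Matrix (Fin m) (Fin m) ℝ)).PosDef := by
  rw [Matrix.smul_one_eq_diagonal]
  exact Matrix.posDef_diagonal_iff.mpr fun _ => hε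

private lemma smul_psd {ε : ℝ} (hε : 0 ≤ ε) {A : Matrix (Fin m) (Fin m) ℝ}
    (hA : A.PosSemidef) : (ε • A).PosSemidef := by
  refine ⟨?_, fun x => ?_⟩
  · unfold Matrix.IsHermitian
    rw [Matrix.conjTranspose_smul, hA.1.eq]
    simp
  · exact (hA.smul hε).2 x

/-- `tr (T⁻¹ Z) ≤ tr √Z` whenever `T ≥ √Z + εI` in the Löwner order. -/
private lemma step2 {Z T : Matrix (Fin m) (Fin m) ℝ} (hZ : Z.PosSemidef) (hT : T.PosDef)
    {ε : ℝ} (hε : 0 < ε)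
    (hTle : (T - (hZ.sqrt + ε • 1)).PosSemidef) :
    (T⁻¹ * Z).trace ≤ hZ.sqrt.trace := by
  set A := hZ.sqrt with hAdef
  have hA : A.PosSemidef := hZ.posSemidef_sqrt
  have hAA : A * A = Z := hZ.sqrt_mul_self
  have hAε : (A + ε • 1).PosDef := Matrix.PosDef.posSemidef_add hA (smul_one_posDef hε)
  have hAεu : IsUnit (A + ε • 1).det := Matrix.isUnit_iff_isUnit_det _ |>.mp hAε.isUnit
  have hinv : ((A + ε • 1)⁻¹ - T⁻¹).PosSemidef := inv_sub_inv_psd hAε hT hTle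
  have e1 : (T⁻¹ * Z).trace = (A * T⁻¹ * A).trace := by
    rw [← hAA, Matrix.trace_mul_cycle A T⁻¹ A, Matrix.trace_mul_comm T⁻¹ (A * A)]
  have e2 : (A * (A + ε • 1)⁻¹ * A).trace = ((A + ε • 1)⁻¹ * Z).trace := by
    rw [← hAA, Matrix.trace_mul_cycle A (A + ε • 1)⁻¹ A,
      Matrix.trace_mul_comm (A * A) (A + ε • 1)⁻¹]
  have i1 : (A * T⁻¹ * A).trace ≤ (A * (A + ε • 1)⁻¹ * A).trace := by
    apply trace_le_of_psd_sub
    have hc := hinv.mul_mul_conjTranspose_same A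
    rw [hA.1.eq] at hc
    have he : A * ((A + ε • 1)⁻¹ - T⁻¹) * A
        = A * (A + ε • 1)⁻¹ * A - A * T⁻¹ * A := by noncomm_ring
    rwa [he] at hc
  have i2 : ((A + ε • 1)⁻¹ * Z).trace ≤ A.trace := by
    have h0 : 0 ≤ ((A + ε • 1)⁻¹ * (ε • A)).trace :=
      trace_mul_nonneg hAε.inv.posSemidef (smul_psd hε.le hA)
    have e3 : (A + ε • 1) * A = Z + ε • A := by
      rw [← hAA, Matrix.add_mul, Matrix.smul_mul, one_mul]
    have e4 : ((A + ε • 1)⁻¹ * ((A + ε • 1) * A)).trace = A.trace := by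
      rw [← Matrix.mul_assoc, Matrix.nonsing_inv_mul _ hAεu, one_mul]
    have e5 : (A + ε • 1)⁻¹ * ((A + ε • 1) * A)
        = (A + ε • 1)⁻¹ * Z + (A + ε • 1)⁻¹ * (ε • A) := by
      rw [e3, Matrix.mul_add]
    rw [e5, Matrix.trace_add] at e4
    linarith
  calc (T⁻¹ * Z).trace = (A * T⁻¹ * A).trace := e1
    _ ≤ (A * (A + ε • 1)⁻¹ * A).trace := i1
    _ = ((A + ε • 1)⁻¹ * Z).trace := e2
    _ ≤ A.trace := i2

private lemma key_eps {X Y : Matrix (Fin m) (Fin m) ℝ} (hX : X.PosSemidef) (hY : Y.PosSemidef)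
    {ε : ℝ} (hε : 0 < ε) :
    2 * ((hX.add hY).sqrt).trace
      ≤ 2 * (hX.sqrt.trace + hY.sqrt.trace) + ε * m := by
  set A := hX.sqrt with hAdef
  set B := hY.sqrt with hBdef
  set S := (hX.add hY).sqrt with hSdef
  have hA : A.PosSemidef := hX.posSemidef_sqrt
  have hB : B.PosSemidef := hY.posSemidef_sqrt
  have hS : S.PosSemidef := (hX.add hY).posSemidef_sqrt
  have hSS : S * S = X + Y := (hX.add hY).sqrt_mul_self
  set T := A + B + ε • (1 : Matrix (Fin m) (Fin m) ℝ) with hTdef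
  have hT : T.PosDef := Matrix.PosDef.posSemidef_add (hA.add hB) (smul_one_posDef hε)
  have hTu : IsUnit T.det := Matrix.isUnit_iff_isUnit_det T |>.mp hT.isUnit
  have hTiT : T⁻¹ * T = 1 := Matrix.nonsing_inv_mul T hTu
  have hTTi : T * T⁻¹ = 1 := Matrix.mul_nonsing_inv T hTu
  -- AM-GM step: 0 ≤ tr(T⁻¹ (S-T)²)
  have hsq : ((S - T) * (S - T)).PosSemidef := by
    have h := Matrix.posSemidef_conjTranspose_mul_self (S - T)
    rwa [(hS.1.sub hT.1).eq] at h
  have h1 : 0 ≤ (T⁻¹ * ((S - T) * (S - T))).trace :=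
    trace_mul_nonneg hT.inv.posSemidef hsq
  have hexp : T⁻¹ * ((S - T) * (S - T))
      = T⁻¹ * (S * S) - T⁻¹ * S * T - T⁻¹ * (T * S) + T⁻¹ * (T * T) := by
    noncomm_ring
  have eb : (T⁻¹ * S * T).trace = S.trace := by
    rw [Matrix.trace_mul_cycle, hTTi, one_mul]
  have ec : (T⁻¹ * (T * S)).trace = S.trace := by
    rw [← Matrix.mul_assoc, hTiT, one_mul]
  have ed : (T⁻¹ * (T * T)).trace = T.trace := by
    rw [← Matrix.mul_assoc, hTiT, one_mul]
  have ea : T⁻¹ * (S * S) = T⁻¹ * X + T⁻¹ * Y := by rw [hSS, Matrix.mul_add]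
  rw [hexp, Matrix.trace_add, Matrix.trace_sub, Matrix.trace_sub, ea, Matrix.trace_add,
    eb, ec, ed] at h1
  -- bound tr(T⁻¹ X) and tr(T⁻¹ Y)
  have hX2 : (T⁻¹ * X).trace ≤ A.trace := by
    refine step2 hX hT hε ?_
    have : T - (A + ε • 1) = B := by rw [hTdef]; abel
    rwa [this]
  have hY2 : (T⁻¹ * Y).trace ≤ B.trace := by
    refine step2 hY hT hε ?_
    have : T - (B + ε • 1) = A := by rw [hTdef]; abel
    rwa [this]
  -- trace of T
  have hTtr : T.trace = A.trace + B.trace + ε * m := by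
    rw [hTdef, Matrix.trace_add, Matrix.trace_add, Matrix.trace_smul, Matrix.trace_one]
    simp [Fintype.card_fin, smul_eq_mul]
  rw [hTtr] at h1
  linarith

private lemma mrpow_half {Z : Matrix (Fin m) (Fin m) ℝ} (hZ : Z.PosSemidef) :
    mrpow Z (1/2) = hZ.sqrt := by
  rw [mrpow, dif_pos hZ.1, Matrix.PosSemidef.sqrt]
  have hd : (fun i => (hZ.1.eigenvalues i) ^ ((1:ℝ)/2))
      = ((↑) ∘ Real.sqrt ∘ hZ.1.eigenvalues : Fin m → ℝ) := by
    funext i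
    simp only [Function.comp_apply]
    rw [Real.sqrt_eq_rpow]
  rw [hd]

end Aux

/-- Subadditivity of the trace of the matrix square root on PSD matrices. -/
theorem stmt1 {m : ℕ} {X Y : Matrix (Fin m) (Fin m) ℝ}
    (hX : X.PosSemidef) (hY : Y.PosSemidef) :
    (mrpow (X + Y) (1/2)).trace ≤ (mrpow X (1/2)).trace + (mrpow Y (1/2)).trace := by
  rw [mrpow_half (hX.add hY), mrpow_half hX, mrpow_half hY]
  refine le_of_forall_pos_le_add fun δ hδ => ?_
  have hε : 0 < δ / (m + 1) := by positivity
  have h := key_eps hX hY hε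
  have hm : (δ / (m + 1)) * m ≤ δ := by
    rw [div_mul_eq_mul_div, div_le_iff₀ (by positivity)]
    have : (0:ℝ) ≤ δ := hδ.le
    nlinarith [Nat.cast_nonneg (α := ℝ) m]
  linarith

end Paper
end
end

section
/- Let X be a random symmetric positive semidefinite m×m matrix and t ∈ [0,1]. Then E[X^t] ⪯ (E[X])^t, i.e., the matrix power function with exponent in [0,1] is operator concave in expectation. -/
open Matrix BigOperators

noncomputable section

namespace Paper

open MeasureTheory Set


variable {m : ℕ} {A : Matrix (Fin m) (Fin m) ℝ}

/-- Apply a scalar function spectrally to a hermitian matrix. -/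
def sdiag (hA : A.IsHermitian) (f : ℝ → ℝ) : Matrix (Fin m) (Fin m) ℝ :=
  (hA.eigenvectorUnitary : Matrix (Fin m) (Fin m) ℝ) * diagonal (fun i => f (hA.eigenvalues i))
    * star (hA.eigenvectorUnitary : Matrix (Fin m) (Fin m) ℝ)

lemma star_mul_self_eigen (hA : A.IsHermitian) :
    star (hA.eigenvectorUnitary : Matrix (Fin m) (Fin m) ℝ) * (hA.eigenvectorUnitary : Matrix (Fin m) (Fin m) ℝ) = 1 :=
  Matrix.mem_unitaryGroup_iff'.mp (hA.eigenvectorUnitary).2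

lemma self_mul_star_eigen (hA : A.IsHermitian) :
    (hA.eigenvectorUnitary : Matrix (Fin m) (Fin m) ℝ) * star (hA.eigenvectorUnitary : Matrix (Fin m) (Fin m) ℝ) = 1 :=
  Matrix.mem_unitaryGroup_iff.mp (hA.eigenvectorUnitary).2

lemma sdiag_congr (hA : A.IsHermitian) {f g : ℝ → ℝ}
    (h : ∀ i, f (hA.eigenvalues i) = g (hA.eigenvalues i)) : sdiag hA f = sdiag hA g := by
  unfold sdiag
  congr 2
  exact congrArg _ (funext h)

lemma sdiag_mul (hA : A.IsHermitian) (f g : ℝ → ℝ) :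
    sdiag hA f * sdiag hA g = sdiag hA (fun x => f x * g x) := by
  unfold sdiag
  rw [show ∀ (U D1 V D2 : Matrix (Fin m) (Fin m) ℝ), U * D1 * V * (U * D2 * V) = U * (D1 * (V * U) * D2) * V by
    intros; noncomm_ring]
  rw [star_mul_self_eigen hA, mul_one, diagonal_mul_diagonal]

lemma sdiag_eq_self (hA : A.IsHermitian) : sdiag hA (fun x => x) = A := by
  unfold sdiag
  conv_rhs => rw [hA.spectral_theorem]
  simp

lemma sdiag_one (hA : A.IsHermitian) : sdiag hA (fun _ => 1) = 1 := by
  unfold sdiag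
  rw [diagonal_one, mul_one, self_mul_star_eigen hA]

lemma sdiag_smul (hA : A.IsHermitian) (f : ℝ → ℝ) (s : ℝ) :
    s • sdiag hA f = sdiag hA (fun x => s * f x) := by
  unfold sdiag
  rw [← smul_mul_assoc, ← mul_smul_comm]
  congr 2
  rw [← diagonal_smul]
  congr 1

lemma sdiag_sub (hA : A.IsHermitian) (f g : ℝ → ℝ) :
    sdiag hA f - sdiag hA g = sdiag hA (fun x => f x - g x) := by
  unfold sdiag
  rw [← sub_mul, ← mul_sub, ← diagonal_sub]

lemma sdiag_add (hA : A.IsHermitian) (f g : ℝ → ℝ) :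
    sdiag hA f + sdiag hA g = sdiag hA (fun x => f x + g x) := by
  unfold sdiag
  rw [← add_mul, ← mul_add, ← diagonal_add]

lemma sdiag_inv (hA : A.IsHermitian) (f : ℝ → ℝ) (hf : ∀ i, f (hA.eigenvalues i) ≠ 0) :
    (sdiag hA f)⁻¹ = sdiag hA (fun x => (f x)⁻¹) := by
  apply Matrix.inv_eq_right_inv
  rw [sdiag_mul]
  have h1 : (fun i => (fun x => f x * (f x)⁻¹) (hA.eigenvalues i)) = fun _ : Fin m => (1:ℝ) :=
    funext fun i => mul_inv_cancel₀ (hf i)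
  unfold sdiag
  rw [h1, diagonal_one, mul_one, self_mul_star_eigen hA]

lemma sdiag_herm (hA : A.IsHermitian) (f : ℝ → ℝ) : (sdiag hA f).IsHermitian := by
  unfold sdiag Matrix.IsHermitian
  rw [Matrix.star_eq_conjTranspose]
  rw [conjTranspose_mul, conjTranspose_mul, conjTranspose_conjTranspose, diagonal_conjTranspose]
  simp [mul_assoc, star_trivial]

lemma quad_sdiag (hA : A.IsHermitian) (f : ℝ → ℝ) (v : Fin m → ℝ) :
    v ⬝ᵥ (sdiag hA f) *ᵥ v
      = ∑ i, f (hA.eigenvalues i) * ((star (hA.eigenvectorUnitary : Matrix (Fin m) (Fin m) ℝ) *ᵥ v) i)^2 := by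
  unfold sdiag
  set U : Matrix (Fin m) (Fin m) ℝ := (hA.eigenvectorUnitary : Matrix (Fin m) (Fin m) ℝ) with hU
  have hw : v ᵥ* U = star U *ᵥ v := by
    rw [Matrix.star_eq_conjTranspose, conjTranspose_eq_transpose_of_trivial, mulVec_transpose]
  rw [← mulVec_mulVec, dotProduct_mulVec, ← vecMul_vecMul, hw]
  simp only [dotProduct, vecMul_diagonal]
  exact Finset.sum_congr rfl fun i _ => by ring

lemma mrpow_eq_sdiag (hA : A.IsHermitian) (t : ℝ) : mrpow A t = sdiag hA (fun x => x ^ t) := by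
  rw [mrpow, dif_pos hA]
  rfl

/-- The resolvent-type matrix `1 - s•(A+s•1)⁻¹`, i.e. `A(A+s)⁻¹` spectrally. -/
def Qm (s : ℝ) (A : Matrix (Fin m) (Fin m) ℝ) : Matrix (Fin m) (Fin m) ℝ :=
  (1 : Matrix (Fin m) (Fin m) ℝ) - s • (A + s • (1 : Matrix (Fin m) (Fin m) ℝ))⁻¹

lemma shift_eq_sdiag (hA : A.IsHermitian) (s : ℝ) :
    A + s • (1 : Matrix (Fin m) (Fin m) ℝ) = sdiag hA (fun x => x + s) := by
  conv_lhs => rw [← sdiag_eq_self hA, ← sdiag_one hA]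
  rw [sdiag_smul, sdiag_add]
  exact sdiag_congr hA fun i => by ring

lemma Qm_eq_sdiag (hA : A.PosSemidef) {s : ℝ} (hs : 0 < s) :
    Qm s A = sdiag hA.1 (fun x => x / (x + s)) := by
  have hev : ∀ i, 0 ≤ hA.1.eigenvalues i := hA.eigenvalues_nonneg
  unfold Qm
  rw [shift_eq_sdiag hA.1, sdiag_inv hA.1 _ (fun i => by have := hev i; positivity),
    sdiag_smul, ← sdiag_one hA.1, sdiag_sub]
  refine sdiag_congr hA.1 fun i => ?_
  have h0 := hev i
  have h1 : hA.1.eigenvalues i + s > 0 := by linarith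
  field_simp
  ring

/-- The shifted matrix is positive definite. -/
lemma shift_posDef (hA : A.PosSemidef) {s : ℝ} (hs : 0 < s) :
    (A + s • (1 : Matrix (Fin m) (Fin m) ℝ)).PosDef := by
  refine Matrix.PosDef.of_dotProduct_mulVec_pos ?_ ?_
  · show (A + s • (1:Matrix (Fin m) (Fin m) ℝ))ᴴ = _
    rw [conjTranspose_add, hA.1.eq, conjTranspose_smul, conjTranspose_one, star_trivial]
  · intro v hv
    rw [star_trivial, add_mulVec, dotProduct_add, smul_mulVec, one_mulVec,
      dotProduct_smul, smul_eq_mul]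
    have h2 := hA.dotProduct_mulVec_nonneg v
    rw [star_trivial] at h2
    have h3 : 0 < v ⬝ᵥ v := by
      have := dotProduct_star_self_pos_iff (v := v) |>.mpr hv
      rwa [star_trivial] at this
    nlinarith

variable {m : ℕ}


/-- Tangent-line inequality for the inverse: for `P` positive definite and `Y` hermitian,
`2 v*Yv - v*(YPY)v ≤ v*P⁻¹v`. -/
lemma tangent_inv {P Y : Matrix (Fin m) (Fin m) ℝ} (hP : P.PosDef) (hY : Y.IsHermitian)
    (v : Fin m → ℝ) :
    2 * (v ⬝ᵥ Y *ᵥ v) - v ⬝ᵥ (Y * P * Y) *ᵥ v ≤ v ⬝ᵥ P⁻¹ *ᵥ v := by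
  set S := sdiag hP.isHermitian (fun x => Real.sqrt x) with hS
  have hSherm : S.IsHermitian := sdiag_herm _ _
  have hSS : S * S = P := by
    rw [hS, sdiag_mul, sdiag_congr hP.isHermitian (g := fun x => x) fun i =>
      Real.mul_self_sqrt (hP.posSemidef.eigenvalues_nonneg i), sdiag_eq_self]
  have hdet : IsUnit S.det := by
    have : IsUnit P.det := hP.det_pos.ne'.isUnit
    rw [← hSS, det_mul] at this
    exact (IsUnit.mul_iff.mp this).1
  have hSinv : S⁻¹ * S = 1 := nonsing_inv_mul S hdet
  have hSinv' : S * S⁻¹ = 1 := mul_nonsing_inv S hdet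
  set C := S⁻¹ - S * Y with hC
  have hCherm : Cᴴ = S⁻¹ - Y * S := by
    rw [hC, conjTranspose_sub, conjTranspose_mul, conjTranspose_nonsing_inv, hSherm.eq, hY.eq]
  have hPinv : S⁻¹ * S⁻¹ = P⁻¹ := by
    rw [← hSS, Matrix.mul_inv_rev]
  have hexp : Cᴴ * C = P⁻¹ - Y - Y + Y * P * Y := by
    rw [hCherm, hC]
    rw [sub_mul, mul_sub, mul_sub, hPinv]
    rw [show Y * S * (S * Y) = Y * (S * S) * Y by noncomm_ring, hSS]
    rw [show Y * S * S⁻¹ = Y * (S * S⁻¹) by noncomm_ring, hSinv', mul_one,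
      ← mul_assoc S⁻¹ S Y, hSinv, one_mul]
    noncomm_ring
  have hpsd := Matrix.posSemidef_conjTranspose_mul_self C
  have hquad := hpsd.dotProduct_mulVec_nonneg v
  rw [star_trivial] at hquad
  rw [hexp] at hquad
  have hlin : v ⬝ᵥ (P⁻¹ - Y - Y + Y * P * Y) *ᵥ v
      = v ⬝ᵥ P⁻¹ *ᵥ v - v ⬝ᵥ Y *ᵥ v - v ⬝ᵥ Y *ᵥ v + v ⬝ᵥ (Y * P * Y) *ᵥ v := by
    simp [Matrix.add_mulVec, Matrix.sub_mulVec, dotProduct_add, dotProduct_sub]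
  rw [hlin] at hquad
  linarith

lemma quad_expand (N : Matrix (Fin m) (Fin m) ℝ) (v : Fin m → ℝ) :
    v ⬝ᵥ N *ᵥ v = ∑ i, ∑ j, v i * N i j * v j := by
  simp [dotProduct, mulVec, Finset.mul_sum, mul_assoc]

lemma quad_conj {Y : Matrix (Fin m) (Fin m) ℝ} (hY : Y.IsHermitian)
    (M : Matrix (Fin m) (Fin m) ℝ) (v : Fin m → ℝ) :
    v ⬝ᵥ (Y * M * Y) *ᵥ v = (Y *ᵥ v) ⬝ᵥ M *ᵥ (Y *ᵥ v) := by
  have hYt : Yᵀ = Y := by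
    rw [← conjTranspose_eq_transpose_of_trivial, hY.eq]
  rw [← mulVec_mulVec, ← mulVec_mulVec, dotProduct_mulVec]
  congr 1
  rw [← mulVec_transpose, hYt]

lemma quad_shift (M : Matrix (Fin m) (Fin m) ℝ) (s : ℝ) (v : Fin m → ℝ) :
    v ⬝ᵥ (M + s • (1 : Matrix (Fin m) (Fin m) ℝ)) *ᵥ v = v ⬝ᵥ M *ᵥ v + s * (v ⬝ᵥ v) := by
  rw [add_mulVec, dotProduct_add, smul_mulVec, one_mulVec, dotProduct_smul, smul_eq_mul]

section Meas

instance matMS : MeasurableSpace (Matrix (Fin m) (Fin m) ℝ) :=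
  inferInstanceAs (MeasurableSpace (Fin m → Fin m → ℝ))

instance matBorel : BorelSpace (Matrix (Fin m) (Fin m) ℝ) :=
  inferInstanceAs (BorelSpace (Fin m → Fin m → ℝ))

instance matSC : SecondCountableTopology (Matrix (Fin m) (Fin m) ℝ) :=
  inferInstanceAs (SecondCountableTopology (Fin m → Fin m → ℝ))

instance matAdd2 : MeasurableAdd₂ (Matrix (Fin m) (Fin m) ℝ) :=
  inferInstanceAs (MeasurableAdd₂ (Fin m → Fin m → ℝ))

instance matSub2 : MeasurableSub₂ (Matrix (Fin m) (Fin m) ℝ) :=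
  inferInstanceAs (MeasurableSub₂ (Fin m → Fin m → ℝ))

instance matSMul2 : MeasurableSMul₂ ℝ (Matrix (Fin m) (Fin m) ℝ) :=
  inferInstanceAs (MeasurableSMul₂ ℝ (Fin m → Fin m → ℝ))

lemma measurable_matrix_elem (i j : Fin m) :
    Measurable fun M : Matrix (Fin m) (Fin m) ℝ => M i j :=
  (measurable_pi_apply (a := j)).comp (measurable_pi_apply (a := i))

lemma measurable_matrix_inv :
    Measurable fun N : Matrix (Fin m) (Fin m) ℝ => N⁻¹ := by
  have h : (fun N : Matrix (Fin m) (Fin m) ℝ => N⁻¹)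
      = fun N : Matrix (Fin m) (Fin m) ℝ => Ring.inverse N.det • N.adjugate := by
    funext N; rw [Matrix.inv_def]
  rw [h]
  apply Measurable.fun_smul
  · rw [Ring.inverse_eq_inv']
    exact (Continuous.matrix_det continuous_id).measurable.inv
  · exact (Continuous.matrix_adjugate continuous_id).measurable

/-- Measurability of `(s, M) ↦ v ⬝ᵥ Qm s M *ᵥ v`. -/
lemma measurable_quadQm (v : Fin m → ℝ) :
    Measurable fun p : ℝ × Matrix (Fin m) (Fin m) ℝ => v ⬝ᵥ (Qm p.1 p.2) *ᵥ v := by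
  have h1 : Measurable fun p : ℝ × Matrix (Fin m) (Fin m) ℝ =>
      (p.2 + p.1 • (1 : Matrix (Fin m) (Fin m) ℝ))⁻¹ := by
    apply measurable_matrix_inv.comp
    apply Measurable.add measurable_snd
    exact (continuous_fst.smul continuous_const).measurable
  have h2 : Measurable fun p : ℝ × Matrix (Fin m) (Fin m) ℝ => Qm p.1 p.2 := by
    unfold Qm
    exact measurable_const.sub (measurable_fst.smul h1)
  have h3 : Measurable fun N : Matrix (Fin m) (Fin m) ℝ => v ⬝ᵥ N *ᵥ v := by
    simp_rw [quad_expand]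
    exact Finset.measurable_sum _ fun i _ => Finset.measurable_sum _ fun j _ =>
      ((measurable_matrix_elem i j).const_mul (v i)).mul_const (v j)
  exact h3.comp h2

end Meas


variable {t : ℝ}

/-- The normalizing constant `∫_0^∞ u^{t-1}/(1+u) du`. -/
def c₀ (t : ℝ) : ℝ := ∫ u in Ioi (0:ℝ), u ^ (t-1) / (1+u)

lemma contOn (t : ℝ) : ContinuousOn (fun u : ℝ => u ^ (t-1) / (1+u)) (Ioi 0) := by
  apply ContinuousOn.div
  · intro u hu
    exact (Real.continuousAt_rpow_const u (t-1) (Or.inl (ne_of_gt hu))).continuousWithinAt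
  · fun_prop
  · intro u hu
    have : (0:ℝ) < u := hu
    positivity

lemma integrable_c₀ (ht0 : 0 < t) (ht1 : t < 1) :
    IntegrableOn (fun u : ℝ => u ^ (t-1) / (1+u)) (Ioi 0) := by
  have hsplit : Ioc (0:ℝ) 1 ∪ Ioi 1 = Ioi 0 := Ioc_union_Ioi_eq_Ioi zero_le_one
  rw [← hsplit]
  apply IntegrableOn.union
  · have hg : IntegrableOn (fun u : ℝ => u ^ (t-1)) (Ioc 0 1) := by
      have h := intervalIntegral.intervalIntegrable_rpow' (a := (0:ℝ)) (b := 1)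
        (show (-1:ℝ) < t-1 by linarith)
      rwa [intervalIntegrable_iff_integrableOn_Ioc_of_le zero_le_one] at h
    apply hg.mono' (((contOn t).mono Ioc_subset_Ioi_self).aestronglyMeasurable measurableSet_Ioc)
    filter_upwards [ae_restrict_mem measurableSet_Ioc] with u hu
    have hu0 : (0:ℝ) < u := hu.1
    rw [Real.norm_eq_abs, abs_div, abs_of_nonneg (Real.rpow_nonneg hu0.le _),
      abs_of_nonneg (by linarith : (0:ℝ) ≤ 1 + u)]
    rw [div_le_iff₀ (by linarith)]
    nlinarith [Real.rpow_nonneg hu0.le (t-1)]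
  · have hg : IntegrableOn (fun u : ℝ => u ^ (t-2)) (Ioi 1) :=
      integrableOn_Ioi_rpow_of_lt (by linarith) one_pos
    apply hg.mono' (((contOn t).mono (Ioi_subset_Ioi zero_le_one)).aestronglyMeasurable measurableSet_Ioi)
    filter_upwards [ae_restrict_mem measurableSet_Ioi] with u hu
    have hu1 : (1:ℝ) < u := hu
    have hu0 : (0:ℝ) < u := by linarith
    rw [Real.norm_eq_abs, abs_div, abs_of_nonneg (Real.rpow_nonneg hu0.le _),
      abs_of_nonneg (by linarith : (0:ℝ) ≤ 1 + u)]
    have h2 : u ^ (t-2) = u ^ (t-1) / u := by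
      rw [eq_div_iff (ne_of_gt hu0), ← Real.rpow_add_one (ne_of_gt hu0)]
      congr 1
      ring
    rw [h2, div_le_div_iff₀ (by linarith) hu0]
    have := Real.rpow_nonneg hu0.le (t-1)
    nlinarith

lemma c₀_pos (ht0 : 0 < t) (ht1 : t < 1) : 0 < c₀ t := by
  unfold c₀
  have hnn : 0 ≤ᶠ[ae (volume.restrict (Ioi (0:ℝ)))] fun u : ℝ => u ^ (t-1) / (1+u) := by
    filter_upwards [ae_restrict_mem measurableSet_Ioi] with u hu
    have hu0 : (0:ℝ) < u := hu
    positivity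
  apply (setIntegral_pos_iff_support_of_nonneg_ae hnn (integrable_c₀ ht0 ht1)).2
  have hsupp : Ioi (0:ℝ) ⊆ Function.support fun u : ℝ => u ^ (t-1) / (1+u) := by
    intro u hu
    have hu0 : (0:ℝ) < u := hu
    have : (0:ℝ) < u ^ (t-1) / (1+u) := by positivity
    exact ne_of_gt this
  rw [Set.inter_eq_right.mpr hsupp]
  simp

/-- Integrability of `s^(t-1) x/(x+s)` and value of its integral. -/
lemma key_integral (ht0 : 0 < t) (ht1 : t < 1) {x : ℝ} (hx : 0 < x) :
    IntegrableOn (fun s : ℝ => s ^ (t-1) * (x/(x+s))) (Ioi 0) ∧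
    ∫ s in Ioi (0:ℝ), s ^ (t-1) * (x/(x+s)) = c₀ t * x ^ t := by
  set f : ℝ → ℝ := fun s => s ^ (t-1) * (x/(x+s)) with hf
  have h4 : x ^ (t-1) * x = x ^ t := by
    rw [← Real.rpow_add_one (ne_of_gt hx)]; norm_num
  have hcomp : EqOn (fun u => f (x * u)) (fun u : ℝ => x ^ (t-1) * (u ^ (t-1) / (1+u))) (Ioi 0) := by
    intro u hu
    have hu0 : (0:ℝ) < u := hu
    have h1u : (0:ℝ) < 1 + u := by linarith
    have hmul : (x*u) ^ (t-1) = x ^ (t-1) * u ^ (t-1) := Real.mul_rpow hx.le hu0.le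
    have hxx : x + x*u = x * (1+u) := by ring
    simp only [hf]
    rw [hmul, hxx, div_mul_eq_div_div, div_self (ne_of_gt hx)]
    ring
  have hint : IntegrableOn (fun u => f (x * u)) (Ioi 0) := by
    exact IntegrableOn.congr_fun ((integrable_c₀ ht0 ht1).const_mul (x ^ (t-1))) hcomp.symm measurableSet_Ioi
  have hIcomp : IntegrableOn f (Ioi 0) := by
    have := (integrableOn_Ioi_comp_mul_left_iff f 0 hx).mp hint
    rwa [mul_zero] at this
  refine ⟨hIcomp, ?_⟩
  have heq := integral_comp_mul_left_Ioi f 0 hx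
  rw [mul_zero] at heq
  rw [setIntegral_congr_fun measurableSet_Ioi hcomp, MeasureTheory.integral_const_mul,
    smul_eq_mul] at heq
  have hxne : x ≠ 0 := ne_of_gt hx
  have h5 : x * (x ^ (t-1) * ∫ a in Ioi (0:ℝ), a ^ (t-1) / (1+a)) = x * (x⁻¹ * ∫ s in Ioi (0:ℝ), f s) := by
    rw [heq]
  rw [← mul_assoc x x⁻¹, mul_inv_cancel₀ hxne, one_mul] at h5
  rw [← h5, c₀, ← h4]
  ring


lemma quad_Qm_nonneg {A : Matrix (Fin m) (Fin m) ℝ} (hA : A.PosSemidef) {s : ℝ} (hs : 0 < s)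
    (v : Fin m → ℝ) : 0 ≤ v ⬝ᵥ (Qm s A) *ᵥ v := by
  rw [Qm_eq_sdiag hA hs, quad_sdiag]
  apply Finset.sum_nonneg
  intro i _
  have h0 := hA.eigenvalues_nonneg i
  have : (0:ℝ) ≤ hA.1.eigenvalues i / (hA.1.eigenvalues i + s) := by positivity
  exact mul_nonneg this (sq_nonneg _)

lemma quad_mrpow_nonneg {A : Matrix (Fin m) (Fin m) ℝ} (hA : A.PosSemidef) (t : ℝ)
    (v : Fin m → ℝ) : 0 ≤ v ⬝ᵥ (mrpow A t) *ᵥ v := by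
  rw [mrpow_eq_sdiag hA.1, quad_sdiag]
  apply Finset.sum_nonneg
  intro i _
  exact mul_nonneg (Real.rpow_nonneg (hA.eigenvalues_nonneg i) t) (sq_nonneg _)

/-- Integral representation of the quadratic form of `mrpow`. -/
lemma rep_integral {t : ℝ} (ht0 : 0 < t) (ht1 : t < 1)
    {A : Matrix (Fin m) (Fin m) ℝ} (hA : A.PosSemidef) (v : Fin m → ℝ) :
    IntegrableOn (fun s : ℝ => s ^ (t-1) * (v ⬝ᵥ (Qm s A) *ᵥ v)) (Ioi 0) ∧
    ∫ s in Ioi (0:ℝ), s ^ (t-1) * (v ⬝ᵥ (Qm s A) *ᵥ v) = c₀ t * (v ⬝ᵥ (mrpow A t) *ᵥ v) := by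
  set lam : Fin m → ℝ := hA.1.eigenvalues with hlam
  set w : Fin m → ℝ := fun i =>
    ((star (hA.1.eigenvectorUnitary : Matrix (Fin m) (Fin m) ℝ) *ᵥ v) i)^2 with hw
  have hEq : EqOn (fun s : ℝ => s ^ (t-1) * (v ⬝ᵥ (Qm s A) *ᵥ v))
      (fun s : ℝ => ∑ i, (s ^ (t-1) * (lam i / (lam i + s))) * w i) (Ioi 0) := by
    intro s hs
    have hs0 : (0:ℝ) < s := hs
    simp only
    rw [Qm_eq_sdiag hA hs0, quad_sdiag, Finset.mul_sum]
    exact Finset.sum_congr rfl fun i _ => by ring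
  have hterm : ∀ i : Fin m,
      IntegrableOn (fun s : ℝ => (s ^ (t-1) * (lam i / (lam i + s))) * w i) (Ioi 0) ∧
      ∫ s in Ioi (0:ℝ), (s ^ (t-1) * (lam i / (lam i + s))) * w i
        = (c₀ t * (lam i) ^ t) * w i := by
    intro i
    rcases eq_or_lt_of_le (hA.eigenvalues_nonneg i) with h0 | hpos
    · have hz : (fun s : ℝ => (s ^ (t-1) * (lam i / (lam i + s))) * w i) = fun _ => 0 := by
        funext s
        rw [hlam, ← h0]
        simp
      constructor
      · rw [hz]; exact integrableOn_zero
      · rw [hz, hlam, ← h0]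
        simp [Real.zero_rpow (ne_of_gt ht0)]
    · obtain ⟨hI, hval⟩ := key_integral ht0 ht1 hpos
      exact ⟨hI.mul_const _, by rw [integral_mul_const, hval]⟩
  constructor
  · exact IntegrableOn.congr_fun (integrable_finset_sum _ fun i _ => (hterm i).1)
      hEq.symm measurableSet_Ioi
  · rw [setIntegral_congr_fun measurableSet_Ioi hEq,
      integral_finset_sum _ fun i _ => (hterm i).1]
    rw [mrpow_eq_sdiag hA.1, quad_sdiag, Finset.mul_sum]
    refine Finset.sum_congr rfl fun i _ => ?_
    rw [(hterm i).2]
    ring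

/-- Quadratic form of an entrywise-integral matrix. -/
lemma quad_integrable {Ω : Type*} [MeasurableSpace Ω] {μ : Measure Ω}
    {M : Ω → Matrix (Fin m) (Fin m) ℝ} (hM : ∀ i j, Integrable (fun ω => M ω i j) μ)
    (v : Fin m → ℝ) : Integrable (fun ω => v ⬝ᵥ (M ω) *ᵥ v) μ := by
  simp_rw [quad_expand]
  exact integrable_finset_sum _ fun i _ => integrable_finset_sum _ fun j _ =>
    (((hM i j).const_mul (v i)).mul_const (v j))

lemma quad_integral {Ω : Type*} [MeasurableSpace Ω] {μ : Measure Ω}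
    {M : Ω → Matrix (Fin m) (Fin m) ℝ} (hM : ∀ i j, Integrable (fun ω => M ω i j) μ)
    (v : Fin m → ℝ) :
    v ⬝ᵥ (Matrix.of fun i j => ∫ ω, M ω i j ∂μ) *ᵥ v = ∫ ω, v ⬝ᵥ (M ω) *ᵥ v ∂μ := by
  simp_rw [quad_expand]
  rw [integral_finset_sum _ fun i _ => integrable_finset_sum _ fun j _ =>
    (((hM i j).const_mul (v i)).mul_const (v j))]
  refine Finset.sum_congr rfl fun i _ => ?_
  rw [integral_finset_sum _ fun j _ => (((hM i j).const_mul (v i)).mul_const (v j))]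
  refine Finset.sum_congr rfl fun j _ => ?_
  rw [Matrix.of_apply]
  rw [show (fun ω => v i * M ω i j * v j) = fun ω => (v i * M ω i j) * v j from rfl,
    integral_mul_const, MeasureTheory.integral_const_mul]


lemma aemeasurable_matrix {Ω : Type*} [MeasurableSpace Ω] {μ : Measure Ω}
    {X : Ω → Matrix (Fin m) (Fin m) ℝ}
    (hint : ∀ i j, Integrable (fun ω => X ω i j) μ) : AEMeasurable X μ := by
  have h1 : ∀ i j, AEMeasurable (fun ω => X ω i j) μ := fun i j => (hint i j).1.aemeasurable
  refine ⟨fun ω => Matrix.of (fun i j => (h1 i j).mk _ ω), ?_, ?_⟩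
  · refine measurable_pi_iff.mpr ?_
    intro i
    rw [measurable_pi_iff]
    intro j
    exact (h1 i j).measurable_mk
  · have hae : ∀ᵐ ω ∂μ, ∀ i j, X ω i j = (h1 i j).mk _ ω := by
      rw [ae_all_iff]
      intro i
      rw [ae_all_iff]
      intro j
      exact (h1 i j).ae_eq_mk
    filter_upwards [hae] with ω hω
    ext i j
    exact hω i j

lemma quad_Qm_expand (M : Matrix (Fin m) (Fin m) ℝ) (s : ℝ) (v : Fin m → ℝ) :
    v ⬝ᵥ (Qm s M) *ᵥ v
      = v ⬝ᵥ v - s * (v ⬝ᵥ (M + s • (1:Matrix (Fin m) (Fin m) ℝ))⁻¹ *ᵥ v) := by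
  unfold Qm
  rw [sub_mulVec, dotProduct_sub, one_mulVec, smul_mulVec, dotProduct_smul, smul_eq_mul]

/-- For each `s > 0`: `E[v* Qm_s(X) v] ≤ v* Qm_s(E X) v` (tangent-line argument). -/
lemma step_s {Ω : Type*} [MeasurableSpace Ω] (μ : Measure Ω) [IsProbabilityMeasure μ]
    (X : Ω → Matrix (Fin m) (Fin m) ℝ) (hpsd : ∀ᵐ ω ∂μ, (X ω).PosSemidef)
    (hint : ∀ i j, Integrable (fun ω => X ω i j) μ)
    {B : Matrix (Fin m) (Fin m) ℝ} (hBdef : B = Matrix.of fun i j => ∫ ω, X ω i j ∂μ)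
    (hBpsd : B.PosSemidef) {s : ℝ} (hs : 0 < s) (v : Fin m → ℝ) :
    Integrable (fun ω => v ⬝ᵥ (Qm s (X ω)) *ᵥ v) μ ∧
    ∫ ω, v ⬝ᵥ (Qm s (X ω)) *ᵥ v ∂μ ≤ v ⬝ᵥ (Qm s B) *ᵥ v := by
  set PB : Matrix (Fin m) (Fin m) ℝ := B + s • 1 with hPBdef
  have hPB : PB.PosDef := shift_posDef hBpsd hs
  set Y : Matrix (Fin m) (Fin m) ℝ := PB⁻¹ with hYdef
  have hY : Y.IsHermitian := hPB.1.inv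
  set u : Fin m → ℝ := Y *ᵥ v with hu
  have hdet : IsUnit PB.det := hPB.det_pos.ne'.isUnit
  have hYPB : Y * PB * Y = Y := by
    rw [hYdef, Matrix.nonsing_inv_mul PB hdet, one_mul]
  set R : Ω → ℝ := fun ω =>
    (v ⬝ᵥ v - 2*s*(v ⬝ᵥ Y *ᵥ v) + s*s*(u ⬝ᵥ u)) + s * (u ⬝ᵥ (X ω) *ᵥ u) with hR
  have hRint : Integrable R μ :=
    (integrable_const _).add ((quad_integrable hint u).const_mul s)
  have hbound : ∀ᵐ ω ∂μ, v ⬝ᵥ (Qm s (X ω)) *ᵥ v ≤ R ω := by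
    filter_upwards [hpsd] with ω hω
    have htan := tangent_inv (shift_posDef hω hs) hY v
    have hconj : v ⬝ᵥ (Y * (X ω + s • 1) * Y) *ᵥ v = u ⬝ᵥ (X ω) *ᵥ u + s*(u ⬝ᵥ u) := by
      rw [quad_conj hY, quad_shift]
    rw [hconj] at htan
    rw [quad_Qm_expand]
    have := mul_le_mul_of_nonneg_left htan hs.le
    simp only [hR]
    nlinarith
  have hnn : ∀ᵐ ω ∂μ, 0 ≤ v ⬝ᵥ (Qm s (X ω)) *ᵥ v :=
    hpsd.mono fun ω hω => quad_Qm_nonneg hω hs v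
  have hXm : AEMeasurable X μ := aemeasurable_matrix hint
  have hmeas : AEStronglyMeasurable (fun ω => v ⬝ᵥ (Qm s (X ω)) *ᵥ v) μ := by
    have hcomp : AEMeasurable (fun ω => ((s, X ω) : ℝ × Matrix (Fin m) (Fin m) ℝ)) μ :=
      aemeasurable_const.prodMk hXm
    exact ((measurable_quadQm v).comp_aemeasurable hcomp).aestronglyMeasurable
  have hQint : Integrable (fun ω => v ⬝ᵥ (Qm s (X ω)) *ᵥ v) μ := by
    apply hRint.mono' hmeas
    filter_upwards [hbound, hnn] with ω h1 h2
    rw [Real.norm_eq_abs, abs_of_nonneg h2]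
    exact h1
  refine ⟨hQint, ?_⟩
  have hRval : ∫ ω, R ω ∂μ = v ⬝ᵥ (Qm s B) *ᵥ v := by
    rw [hR]
    simp only
    rw [integral_add (integrable_const _) ((quad_integrable hint u).const_mul s),
      integral_const, MeasureTheory.integral_const_mul, probReal_univ]
    have hBu : ∫ ω, u ⬝ᵥ (X ω) *ᵥ u ∂μ = u ⬝ᵥ B *ᵥ u := by
      rw [hBdef]; exact (quad_integral hint u).symm
    rw [hBu]
    have h2 : u ⬝ᵥ B *ᵥ u + s*(u ⬝ᵥ u) = v ⬝ᵥ Y *ᵥ v := by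
      rw [← quad_shift, ← hPBdef, ← quad_conj hY, hYPB]
    have h3 : v ⬝ᵥ (Qm s B) *ᵥ v = v ⬝ᵥ v - s * (v ⬝ᵥ Y *ᵥ v) := quad_Qm_expand B s v
    rw [h3, ← h2]
    simp
    ring
  rw [← hRval]
  exact integral_mono_ae hQint hRint hbound


open MeasureTheory in
/-- Operator concavity in expectation: `E[X^t] ⪯ (E[X])^t` for `t ∈ [0,1]`. -/
theorem stmt3 {m : ℕ} {Ω : Type*} [MeasurableSpace Ω] (μ : Measure Ω)
    [IsProbabilityMeasure μ] (X : Ω → Matrix (Fin m) (Fin m) ℝ)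
    (hpsd : ∀ᵐ ω ∂μ, (X ω).PosSemidef)
    {t : ℝ} (ht0 : 0 ≤ t) (ht1 : t ≤ 1)
    (hint : ∀ i j, Integrable (fun ω => X ω i j) μ)
    (hint' : ∀ i j, Integrable (fun ω => mrpow (X ω) t i j) μ) :
    (mrpow (Matrix.of fun i j => ∫ ω, X ω i j ∂μ) t -
      Matrix.of fun i j => ∫ ω, mrpow (X ω) t i j ∂μ).PosSemidef := by
  classical
  set B : Matrix (Fin m) (Fin m) ℝ := Matrix.of fun i j => ∫ ω, X ω i j ∂μ with hBdef
  set E : Matrix (Fin m) (Fin m) ℝ := Matrix.of fun i j => ∫ ω, mrpow (X ω) t i j ∂μ with hEdef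
  have hXherm : ∀ᵐ ω ∂μ, (X ω).IsHermitian := hpsd.mono fun ω h => h.1
  have hmXherm : ∀ᵐ ω ∂μ, (mrpow (X ω) t).IsHermitian := hXherm.mono fun ω h => by
    rw [mrpow_eq_sdiag h]; exact sdiag_herm h _
  have hBherm : B.IsHermitian := by
    ext i j
    rw [conjTranspose_apply, star_trivial]
    show (∫ ω, X ω j i ∂μ) = ∫ ω, X ω i j ∂μ
    refine integral_congr_ae (hXherm.mono fun ω h => ?_)
    show X ω j i = X ω i j
    rw [← h.apply i j, star_trivial]
  have hEherm : E.IsHermitian := by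
    ext i j
    rw [conjTranspose_apply, star_trivial]
    show (∫ ω, mrpow (X ω) t j i ∂μ) = ∫ ω, mrpow (X ω) t i j ∂μ
    refine integral_congr_ae (hmXherm.mono fun ω h => ?_)
    show mrpow (X ω) t j i = mrpow (X ω) t i j
    rw [← h.apply i j, star_trivial]
  have hBpsd : B.PosSemidef := by
    refine Matrix.PosSemidef.of_dotProduct_mulVec_nonneg hBherm fun x => ?_
    rw [star_trivial, hBdef, quad_integral hint]
    refine integral_nonneg_of_ae (hpsd.mono fun ω h => ?_)
    have := h.dotProduct_mulVec_nonneg x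
    rwa [star_trivial] at this
  have hmBherm : (mrpow B t).IsHermitian := by
    rw [mrpow_eq_sdiag hBherm]; exact sdiag_herm _ _
  refine Matrix.PosSemidef.of_dotProduct_mulVec_nonneg (hmBherm.sub hEherm) fun x => ?_
  rw [star_trivial, sub_mulVec, dotProduct_sub, sub_nonneg]
  have hEquad : x ⬝ᵥ E *ᵥ x = ∫ ω, x ⬝ᵥ (mrpow (X ω) t) *ᵥ x ∂μ := quad_integral hint' x
  rw [hEquad]
  -- boundary cases
  rcases eq_or_lt_of_le ht0 with h0 | h0
  · -- t = 0
    have hmr0 : ∀ (C : Matrix (Fin m) (Fin m) ℝ), C.IsHermitian → mrpow C t = 1 := by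
      intro C hC
      rw [mrpow_eq_sdiag hC, sdiag_congr hC (g := fun _ => 1) fun i => by
        rw [← h0, Real.rpow_zero], sdiag_one]
    have hae : ∀ᵐ ω ∂μ, x ⬝ᵥ (mrpow (X ω) t) *ᵥ x
        = x ⬝ᵥ ((1 : Matrix (Fin m) (Fin m) ℝ)) *ᵥ x := hXherm.mono fun ω h => by
      rw [hmr0 _ h]
    rw [integral_congr_ae hae, integral_const, probReal_univ, hmr0 B hBherm]
    simp
  rcases eq_or_lt_of_le ht1 with h1 | h1
  · -- t = 1
    have hmr1 : ∀ (C : Matrix (Fin m) (Fin m) ℝ), C.IsHermitian → mrpow C t = C := by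
      intro C hC
      rw [mrpow_eq_sdiag hC, sdiag_congr hC (g := fun y => y) fun i => by
        rw [h1, Real.rpow_one], sdiag_eq_self]
    have hae : ∀ᵐ ω ∂μ, x ⬝ᵥ (mrpow (X ω) t) *ᵥ x = x ⬝ᵥ (X ω) *ᵥ x :=
      hXherm.mono fun ω h => by rw [hmr1 _ h]
    rw [integral_congr_ae hae, hmr1 B hBherm, hBdef, quad_integral hint]
  -- main case : 0 < t < 1
  have hc := c₀_pos h0 h1
  have hG : Integrable (fun ω => x ⬝ᵥ (mrpow (X ω) t) *ᵥ x) μ := quad_integrable hint' x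
  rw [← mul_le_mul_iff_right₀ hc]
  set h : Ω → ℝ → ℝ := fun ω s => s ^ (t-1) * (x ⬝ᵥ (Qm s (X ω)) *ᵥ x) with hh
  have hrep : ∀ᵐ ω ∂μ, IntegrableOn (h ω) (Ioi 0) ∧
      (∫ s in Ioi (0:ℝ), h ω s) = c₀ t * (x ⬝ᵥ (mrpow (X ω) t) *ᵥ x) :=
    hpsd.mono fun ω hω => rep_integral h0 h1 hω x
  have hXm : AEMeasurable X μ := aemeasurable_matrix hint
  have hprod : AEMeasurable (Function.uncurry fun ω s => ENNReal.ofReal (h ω s))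
      (μ.prod (volume.restrict (Ioi 0))) := by
    apply ENNReal.measurable_ofReal.comp_aemeasurable
    have hc1 : AEMeasurable (fun p : Ω × ℝ => ((p.2, X p.1) : ℝ × Matrix (Fin m) (Fin m) ℝ))
        (μ.prod (volume.restrict (Ioi 0))) :=
      measurable_snd.aemeasurable.prodMk
        (hXm.comp_quasiMeasurePreserving Measure.quasiMeasurePreserving_fst)
    have hF : Measurable fun p : ℝ × Matrix (Fin m) (Fin m) ℝ =>
        p.1 ^ (t-1) * (x ⬝ᵥ (Qm p.1 p.2) *ᵥ x) := by
      apply Measurable.mul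
      · have hr : Measurable fun s : ℝ => s ^ (t-1) := by measurability
        exact hr.comp measurable_fst
      · exact measurable_quadQm x
    exact hF.comp_aemeasurable hc1
  have hA1 : c₀ t * ∫ ω, x ⬝ᵥ (mrpow (X ω) t) *ᵥ x ∂μ
      = ∫ ω, (∫ s in Ioi (0:ℝ), h ω s) ∂μ := by
    rw [← MeasureTheory.integral_const_mul]
    exact (integral_congr_ae (hrep.mono fun ω hω => hω.2)).symm
  have hI_nonneg : ∀ᵐ ω ∂μ, 0 ≤ ∫ s in Ioi (0:ℝ), h ω s := by
    filter_upwards [hpsd, hrep] with ω hω hrω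
    rw [hrω.2]
    exact mul_nonneg hc.le (quad_mrpow_nonneg hω t x)
  have hI_asm : AEStronglyMeasurable (fun ω => ∫ s in Ioi (0:ℝ), h ω s) μ :=
    ((hG.const_mul (c₀ t)).1).congr (hrep.mono fun ω hω => hω.2.symm)
  have hA2 : ∫ ω, (∫ s in Ioi (0:ℝ), h ω s) ∂μ
      = (∫⁻ ω, ∫⁻ s in Ioi (0:ℝ), ENNReal.ofReal (h ω s) ∂volume ∂μ).toReal := by
    rw [integral_eq_lintegral_of_nonneg_ae hI_nonneg hI_asm]
    congr 1
    apply lintegral_congr_ae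
    filter_upwards [hpsd, hrep] with ω hω hrω
    rw [ofReal_integral_eq_lintegral_ofReal hrω.1]
    filter_upwards [ae_restrict_mem measurableSet_Ioi] with s hs
    have hs0 : (0:ℝ) < s := hs
    exact mul_nonneg (Real.rpow_nonneg hs0.le _) (quad_Qm_nonneg hω hs0 x)
  have hswap : ∫⁻ ω, ∫⁻ s in Ioi (0:ℝ), ENNReal.ofReal (h ω s) ∂volume ∂μ
      = ∫⁻ s in Ioi (0:ℝ), ∫⁻ ω, ENNReal.ofReal (h ω s) ∂μ ∂volume :=
    lintegral_lintegral_swap hprod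
  have hrepB := rep_integral h0 h1 hBpsd x
  have hBnn : ∀ᵐ s ∂(volume.restrict (Ioi (0:ℝ))),
      0 ≤ s ^ (t-1) * (x ⬝ᵥ (Qm s B) *ᵥ x) := by
    filter_upwards [ae_restrict_mem measurableSet_Ioi] with s hs
    have hs0 : (0:ℝ) < s := hs
    exact mul_nonneg (Real.rpow_nonneg hs0.le _) (quad_Qm_nonneg hBpsd hs0 x)
  have hbound : ∫⁻ s in Ioi (0:ℝ), ∫⁻ ω, ENNReal.ofReal (h ω s) ∂μ ∂volume
      ≤ ENNReal.ofReal (c₀ t * (x ⬝ᵥ (mrpow B t) *ᵥ x)) := by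
    have hstep : ∀ᵐ s ∂(volume.restrict (Ioi (0:ℝ))),
        ∫⁻ ω, ENNReal.ofReal (h ω s) ∂μ
          ≤ ENNReal.ofReal (s ^ (t-1) * (x ⬝ᵥ (Qm s B) *ᵥ x)) := by
      filter_upwards [ae_restrict_mem measurableSet_Ioi] with s hs
      have hs0 : (0:ℝ) < s := hs
      obtain ⟨hQint, hQle⟩ := step_s μ X hpsd hint hBdef hBpsd hs0 x
      have h1' : Integrable (fun ω => h ω s) μ := hQint.const_mul _
      rw [← ofReal_integral_eq_lintegral_ofReal h1'
        (hpsd.mono fun ω hω => mul_nonneg (Real.rpow_nonneg hs0.le _)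
          (quad_Qm_nonneg hω hs0 x))]
      apply ENNReal.ofReal_le_ofReal
      simp only [hh]
      rw [MeasureTheory.integral_const_mul]
      exact mul_le_mul_of_nonneg_left hQle (Real.rpow_nonneg hs0.le _)
    calc ∫⁻ s in Ioi (0:ℝ), ∫⁻ ω, ENNReal.ofReal (h ω s) ∂μ ∂volume
        ≤ ∫⁻ s in Ioi (0:ℝ), ENNReal.ofReal (s ^ (t-1) * (x ⬝ᵥ (Qm s B) *ᵥ x)) ∂volume :=
          lintegral_mono_ae hstep
      _ = ENNReal.ofReal (∫ s in Ioi (0:ℝ), s ^ (t-1) * (x ⬝ᵥ (Qm s B) *ᵥ x)) :=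
          (ofReal_integral_eq_lintegral_ofReal hrepB.1 hBnn).symm
      _ = ENNReal.ofReal (c₀ t * (x ⬝ᵥ (mrpow B t) *ᵥ x)) := by rw [hrepB.2]
  have hfin := ENNReal.toReal_mono ENNReal.ofReal_ne_top (hswap ▸ hbound)
  rw [ENNReal.toReal_ofReal (mul_nonneg hc.le (quad_mrpow_nonneg hBpsd t x))] at hfin
  calc c₀ t * ∫ ω, x ⬝ᵥ (mrpow (X ω) t) *ᵥ x ∂μ
      = (∫⁻ ω, ∫⁻ s in Ioi (0:ℝ), ENNReal.ofReal (h ω s) ∂volume ∂μ).toReal := by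
        rw [hA1, hA2]
    _ ≤ c₀ t * (x ⬝ᵥ (mrpow B t) *ᵥ x) := hfin

end Paper
end
end

section
/- For an m×n matrix M and symmetric positive definite matrices L ∈ R^{m×m}, R ∈ R^{n×n}, and α ∈ [0,1], the spectral norm satisfies ‖L^α M R^{1−α}‖_op ≤ ‖LM‖_op^α · ‖MR‖_op^{1−α}. -/
open Matrix BigOperators

noncomputable section

namespace Paper

/-! ### Auxiliary lemmas -/

section AuxReal

variable {m n : ℕ}

lemma singVals_nonneg (A : Matrix (Fin m) (Fin n) ℝ) (i : Fin n) : 0 ≤ singVals A i :=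
  Real.sqrt_nonneg _

lemma singVals_le_opNorm (A : Matrix (Fin m) (Fin n) ℝ) (i : Fin n) :
    singVals A i ≤ opNorm A :=
  le_ciSup (Set.Finite.bddAbove (Set.finite_range _)) i

lemma opNorm_nonneg (A : Matrix (Fin m) (Fin n) ℝ) : 0 ≤ opNorm A := by
  rcases isEmpty_or_nonempty (Fin n) with h | h
  · rw [opNorm, iSup, Set.range_eq_empty, Real.sSup_empty]
  · exact le_trans (singVals_nonneg A (Classical.arbitrary _)) (singVals_le_opNorm A _)

lemma sq_singVals (A : Matrix (Fin m) (Fin n) ℝ) (i : Fin n) :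
    singVals A i ^ 2 = (Matrix.isHermitian_conjTranspose_mul_self A).eigenvalues i :=
  Real.sq_sqrt ((Matrix.posSemidef_conjTranspose_mul_self A).eigenvalues_nonneg i)

lemma dot_self_mulVec (A : Matrix (Fin m) (Fin n) ℝ) (u : Fin n → ℝ) :
    (A *ᵥ u) ⬝ᵥ (A *ᵥ u) = u ⬝ᵥ ((Aᴴ * A) *ᵥ u) := by
  rw [Matrix.conjTranspose_eq_transpose_of_trivial, ← Matrix.mulVec_mulVec,
    Matrix.mulVec_transpose, dotProduct_mulVec, dotProduct_comm]

lemma quad_eq (A : Matrix (Fin m) (Fin n) ℝ) (u : Fin n → ℝ) :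
    (A *ᵥ u) ⬝ᵥ (A *ᵥ u) =
      ∑ i, (Matrix.isHermitian_conjTranspose_mul_self A).eigenvalues i *
        ((star ((Matrix.isHermitian_conjTranspose_mul_self A).eigenvectorUnitary :
          Matrix (Fin n) (Fin n) ℝ) *ᵥ u) i)^2 := by
  classical
  have hH := Matrix.isHermitian_conjTranspose_mul_self A
  set U : Matrix (Fin n) (Fin n) ℝ := (hH.eigenvectorUnitary : Matrix (Fin n) (Fin n) ℝ) with hU
  set w : Fin n → ℝ := star U *ᵥ u with hw
  have hsp := hH.spectral_theorem
  rw [Unitary.conjStarAlgAut_apply] at hsp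
  rw [dot_self_mulVec]
  conv_lhs => rw [hsp, ← Matrix.mulVec_mulVec, ← Matrix.mulVec_mulVec,
    dotProduct_mulVec]
  have hvw : u ᵥ* U = w := by
    rw [hw, Matrix.star_eq_conjTranspose, Matrix.conjTranspose_eq_transpose_of_trivial,
      Matrix.mulVec_transpose]
  rw [hvw]
  simp only [dotProduct, Matrix.mulVec_diagonal]
  refine Finset.sum_congr rfl fun i _ => ?_
  simp [RCLike.ofReal]
  change w i * (_ * w i) = _
  ring

lemma dot_w (A : Matrix (Fin m) (Fin n) ℝ) (u : Fin n → ℝ) :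
    ∑ i, ((star ((Matrix.isHermitian_conjTranspose_mul_self A).eigenvectorUnitary :
        Matrix (Fin n) (Fin n) ℝ) *ᵥ u) i)^2 = u ⬝ᵥ u := by
  classical
  have hH := Matrix.isHermitian_conjTranspose_mul_self A
  set U : Matrix (Fin n) (Fin n) ℝ := (hH.eigenvectorUnitary : Matrix (Fin n) (Fin n) ℝ) with hU
  have hUU : U * star U = 1 := Matrix.mem_unitaryGroup_iff.mp hH.eigenvectorUnitary.2
  have h := dot_self_mulVec (star U) u
  have h2 : (star U)ᴴ * star U = 1 := by
    rw [Matrix.star_eq_conjTranspose, Matrix.conjTranspose_conjTranspose,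
      ← Matrix.star_eq_conjTranspose, hUU]
  rw [h2, Matrix.one_mulVec] at h
  rw [← h]
  simp [dotProduct, pow_two]

lemma quad_bound (A : Matrix (Fin m) (Fin n) ℝ) (u : Fin n → ℝ) :
    (A *ᵥ u) ⬝ᵥ (A *ᵥ u) ≤ opNorm A ^ 2 * (u ⬝ᵥ u) := by
  rw [quad_eq, ← dot_w A u, Finset.mul_sum]
  refine Finset.sum_le_sum fun i _ => ?_
  have h3 : (Matrix.isHermitian_conjTranspose_mul_self A).eigenvalues i ≤ opNorm A ^ 2 := by
    rw [← sq_singVals]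
    have h := singVals_le_opNorm A i
    have h0 : 0 ≤ singVals A i := Real.sqrt_nonneg _
    nlinarith
  exact mul_le_mul_of_nonneg_right h3 (sq_nonneg _)

lemma exists_extremal (A : Matrix (Fin m) (Fin n) ℝ) [Nonempty (Fin n)] :
    ∃ u : Fin n → ℝ, u ⬝ᵥ u = 1 ∧ (A *ᵥ u) ⬝ᵥ (A *ᵥ u) = opNorm A ^ 2 := by
  classical
  have hH := Matrix.isHermitian_conjTranspose_mul_self A
  obtain ⟨i₀, hi₀⟩ := Finite.exists_max (singVals A)
  have hop : opNorm A = singVals A i₀ :=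
    le_antisymm (ciSup_le hi₀) (singVals_le_opNorm A i₀)
  refine ⟨⇑(hH.eigenvectorBasis i₀), ?_, ?_⟩
  · have h1 : ‖hH.eigenvectorBasis i₀‖ = 1 := hH.eigenvectorBasis.orthonormal.1 i₀
    have h2 : (inner ℝ (hH.eigenvectorBasis i₀) (hH.eigenvectorBasis i₀) : ℝ) = 1 := by
      rw [real_inner_self_eq_norm_sq, h1]; norm_num
    rw [EuclideanSpace.inner_eq_star_dotProduct] at h2
    simpa using h2
  · have h3 := hH.mulVec_eigenvectorBasis i₀
    rw [dot_self_mulVec, h3]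
    have h4 : ⇑(hH.eigenvectorBasis i₀) ⬝ᵥ (hH.eigenvalues i₀ • ⇑(hH.eigenvectorBasis i₀))
        = hH.eigenvalues i₀ * (⇑(hH.eigenvectorBasis i₀) ⬝ᵥ ⇑(hH.eigenvectorBasis i₀)) := by
      rw [dotProduct_smul, smul_eq_mul]
    have h5 : ⇑(hH.eigenvectorBasis i₀) ⬝ᵥ ⇑(hH.eigenvectorBasis i₀) = 1 := by
      have h1 : ‖hH.eigenvectorBasis i₀‖ = 1 := hH.eigenvectorBasis.orthonormal.1 i₀
      have h2 : (inner ℝ (hH.eigenvectorBasis i₀) (hH.eigenvectorBasis i₀) : ℝ) = 1 := by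
        rw [real_inner_self_eq_norm_sq, h1]; norm_num
      rw [EuclideanSpace.inner_eq_star_dotProduct] at h2
      simpa using h2
    rw [h4, h5, mul_one, hop, sq_singVals]

end AuxReal

section AuxComplex

lemma conj_dot_self {k : ℕ} (v : Fin k → ℂ) : star v ⬝ᵥ v = ((∑ i, ‖v i‖^2 : ℝ) : ℂ) := by
  simp only [dotProduct, Pi.star_apply, Complex.star_def]
  push_cast
  refine Finset.sum_congr rfl fun i _ => ?_
  rw [← Complex.ofReal_pow, Complex.sq_norm,
    Complex.normSq_eq_conj_mul_self]

lemma cs_bound {k : ℕ} (u w : Fin k → ℂ) :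
    ‖star u ⬝ᵥ w‖ ≤ Real.sqrt (∑ i, ‖u i‖^2) * Real.sqrt (∑ i, ‖w i‖^2) := by
  have h := norm_inner_le_norm (𝕜 := ℂ) ((WithLp.equiv 2 _).symm u) ((WithLp.equiv 2 _).symm w)
  rw [EuclideanSpace.inner_eq_star_dotProduct] at h
  rw [dotProduct_comm]
  simpa [EuclideanSpace.norm_eq] using h

lemma unitary_mulVec_normsq {k : ℕ} {P : Matrix (Fin k) (Fin k) ℂ} (hP : Pᴴ * P = 1)
    (v : Fin k → ℂ) : ∑ i, ‖(P *ᵥ v) i‖^2 = ∑ i, ‖v i‖^2 := by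
  have h : star (P *ᵥ v) ⬝ᵥ (P *ᵥ v) = star v ⬝ᵥ v := by
    rw [Matrix.star_mulVec, ← dotProduct_mulVec, Matrix.mulVec_mulVec, hP,
      Matrix.one_mulVec]
  rw [conj_dot_self, conj_dot_self] at h
  exact_mod_cast h

lemma real_mulVec_normsq_le {m n : ℕ} (C : Matrix (Fin m) (Fin n) ℝ) (v : Fin n → ℂ) :
    ∑ i, ‖((C.map Complex.ofReal) *ᵥ v) i‖^2 ≤ opNorm C ^ 2 * ∑ j, ‖v j‖^2 := by
  classical
  set vre : Fin n → ℝ := fun j => (v j).re with hvre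
  set vim : Fin n → ℝ := fun j => (v j).im with hvim
  have hre : ∀ i, ((C.map Complex.ofReal *ᵥ v) i).re = (C *ᵥ vre) i := by
    intro i
    simp [Matrix.mulVec, dotProduct, Complex.re_sum, Matrix.map_apply, hvre]
  have him : ∀ i, ((C.map Complex.ofReal *ᵥ v) i).im = (C *ᵥ vim) i := by
    intro i
    simp [Matrix.mulVec, dotProduct, Complex.im_sum, Matrix.map_apply, hvim]
  have hnorm : ∀ (z : ℂ), ‖z‖^2 = z.re^2 + z.im^2 := by
    intro z
    rw [Complex.sq_norm, Complex.normSq_apply]; ring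
  have h1 : ∑ i, ‖((C.map Complex.ofReal) *ᵥ v) i‖^2
      = (C *ᵥ vre) ⬝ᵥ (C *ᵥ vre) + (C *ᵥ vim) ⬝ᵥ (C *ᵥ vim) := by
    simp only [hnorm, hre, him, dotProduct, ← Finset.sum_add_distrib, pow_two]
  have h2 : ∑ j, ‖v j‖^2 = vre ⬝ᵥ vre + vim ⬝ᵥ vim := by
    simp only [hnorm, dotProduct, ← Finset.sum_add_distrib, pow_two, hvre, hvim]
  rw [h1, h2, mul_add]
  exact add_le_add (quad_bound C vre) (quad_bound C vim)

lemma pairing_bound {m n : ℕ} (C : Matrix (Fin m) (Fin n) ℝ)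
    {P : Matrix (Fin m) (Fin m) ℂ} {Q : Matrix (Fin n) (Fin n) ℂ}
    (hP : Pᴴ * P = 1) (hQ : Qᴴ * Q = 1) {y : Fin m → ℂ} {x : Fin n → ℂ}
    (hy : ∑ i, ‖y i‖^2 = 1) (hx : ∑ j, ‖x j‖^2 = 1) :
    ‖star y ⬝ᵥ ((P * C.map Complex.ofReal * Q) *ᵥ x)‖ ≤ opNorm C := by
  have hPP : P * Pᴴ = 1 := mul_eq_one_comm.mp hP
  have key : star y ⬝ᵥ ((P * C.map Complex.ofReal * Q) *ᵥ x)
      = star (Pᴴ *ᵥ y) ⬝ᵥ ((C.map Complex.ofReal) *ᵥ (Q *ᵥ x)) := by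
    rw [Matrix.star_mulVec, Matrix.conjTranspose_conjTranspose, Matrix.mulVec_mulVec,
      ← dotProduct_mulVec, Matrix.mulVec_mulVec, ← Matrix.mul_assoc]
  rw [key]
  refine le_trans (cs_bound _ _) ?_
  have h1 : ∑ i, ‖(Pᴴ *ᵥ y) i‖^2 = 1 := by
    rw [unitary_mulVec_normsq (by rwa [Matrix.conjTranspose_conjTranspose]) y, hy]
  have h2 : ∑ i, ‖((C.map Complex.ofReal) *ᵥ (Q *ᵥ x)) i‖^2 ≤ opNorm C ^ 2 := by
    refine le_trans (real_mulVec_normsq_le C _) ?_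
    rw [unitary_mulVec_normsq hQ x, hx, mul_one]
  rw [h1, Real.sqrt_one, one_mul]
  refine le_trans (Real.sqrt_le_sqrt h2) ?_
  rw [Real.sqrt_sq (opNorm_nonneg C)]

end AuxComplex

section CpowMat

lemma mapC_mul {a b c : ℕ} (A : Matrix (Fin a) (Fin b) ℝ) (B : Matrix (Fin b) (Fin c) ℝ) :
    (A * B).map Complex.ofReal = A.map Complex.ofReal * B.map Complex.ofReal := by
  ext i j
  simp [Matrix.mul_apply, Matrix.map_apply]

lemma mapC_one {a : ℕ} : (1 : Matrix (Fin a) (Fin a) ℝ).map Complex.ofReal = 1 := by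
  ext i j
  by_cases h : i = j <;> simp [Matrix.map_apply, Matrix.one_apply, h]

/-- `U * diag(lam ^ z) * Uᴴ` as a complex matrix. -/
def cpowMat {k : ℕ} (U : Matrix (Fin k) (Fin k) ℝ) (lam : Fin k → ℝ) (z : ℂ) :
    Matrix (Fin k) (Fin k) ℂ :=
  (U.map Complex.ofReal) * Matrix.diagonal (fun i => (lam i : ℂ) ^ z) *
    ((U.map Complex.ofReal)ᴴ)

variable {k : ℕ} {U : Matrix (Fin k) (Fin k) ℝ} {lam : Fin k → ℝ}

lemma map_star_eq_conjTranspose (U : Matrix (Fin k) (Fin k) ℝ) :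
    (star U).map Complex.ofReal = (U.map Complex.ofReal)ᴴ := by
  rw [Matrix.star_eq_conjTranspose, Matrix.conjTranspose_map Complex.ofReal
    (fun a => (Complex.conj_ofReal a).symm)]

lemma cpowMat_mul (hU' : star U * U = 1) (hlam : ∀ i, 0 < lam i) (z w : ℂ) :
    cpowMat U lam z * cpowMat U lam w = cpowMat U lam (z + w) := by
  have hUc : (U.map Complex.ofReal)ᴴ * (U.map Complex.ofReal) = 1 := by
    rw [← map_star_eq_conjTranspose, ← mapC_mul, hU', mapC_one]
  rw [cpowMat, cpowMat, cpowMat]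
  simp only [Matrix.mul_assoc]
  rw [← Matrix.mul_assoc ((U.map Complex.ofReal)ᴴ) (U.map Complex.ofReal), hUc,
    Matrix.one_mul, ← Matrix.mul_assoc (Matrix.diagonal fun i => (lam i : ℂ) ^ z),
    Matrix.diagonal_mul_diagonal]
  have : (fun i => (lam i : ℂ) ^ z * (lam i : ℂ) ^ w) = fun i => (lam i : ℂ) ^ (z + w) := by
    funext i
    exact (Complex.cpow_add z w (Complex.ofReal_ne_zero.mpr (ne_of_gt (hlam i)))).symm
  rw [this]

lemma cpowMat_unitary (hU : U * star U = 1) (hlam : ∀ i, 0 < lam i) {z : ℂ}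
    (hz : z.re = 0) : (cpowMat U lam z)ᴴ * cpowMat U lam z = 1 := by
  have hUc' : (U.map Complex.ofReal) * (U.map Complex.ofReal)ᴴ = 1 := by
    rw [← map_star_eq_conjTranspose, ← mapC_mul, hU, mapC_one]
  have hUc : (U.map Complex.ofReal)ᴴ * (U.map Complex.ofReal) = 1 :=
    mul_eq_one_comm.mp hUc'
  have hd : (fun i => (star fun i => (lam i : ℂ) ^ z) i * (lam i : ℂ) ^ z)
      = fun _ => (1 : ℂ) := by
    funext i
    have habs : ‖(lam i : ℂ) ^ z‖ = 1 := by
      rw [Complex.norm_cpow_eq_rpow_re_of_pos (hlam i), hz, Real.rpow_zero]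
    simp only [Pi.star_apply, Complex.star_def]
    rw [← Complex.normSq_eq_conj_mul_self, ← Complex.sq_norm, habs]
    norm_num
  rw [cpowMat, Matrix.conjTranspose_mul, Matrix.conjTranspose_mul,
    Matrix.conjTranspose_conjTranspose, Matrix.diagonal_conjTranspose]
  simp only [Matrix.mul_assoc]
  rw [← Matrix.mul_assoc ((U.map Complex.ofReal)ᴴ) (U.map Complex.ofReal), hUc, Matrix.one_mul,
    ← Matrix.mul_assoc (Matrix.diagonal (star fun i => (lam i : ℂ) ^ z)),
    Matrix.diagonal_mul_diagonal, hd, Matrix.diagonal_one, Matrix.one_mul, hUc']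

lemma diag_normsq_le (d : Fin k → ℂ) {K : ℝ} (hd : ∀ i, ‖d i‖ ≤ K)
    (v : Fin k → ℂ) :
    ∑ i, ‖(Matrix.diagonal d *ᵥ v) i‖^2 ≤ K^2 * ∑ i, ‖v i‖^2 := by
  rw [Finset.mul_sum]
  refine Finset.sum_le_sum fun i _ => ?_
  rw [Matrix.mulVec_diagonal, norm_mul, mul_pow]
  exact mul_le_mul_of_nonneg_right (pow_le_pow_left₀ (norm_nonneg _) (hd i) 2) (sq_nonneg _)

lemma cpow_normsq_le (hU : U * star U = 1) {K : ℝ} {z : ℂ}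
    (hd : ∀ i, ‖(lam i : ℂ) ^ z‖ ≤ K) (v : Fin k → ℂ) :
    ∑ i, ‖(cpowMat U lam z *ᵥ v) i‖^2 ≤ K^2 * ∑ i, ‖v i‖^2 := by
  have hUc' : (U.map Complex.ofReal) * (U.map Complex.ofReal)ᴴ = 1 := by
    rw [← map_star_eq_conjTranspose, ← mapC_mul, hU, mapC_one]
  have hUc : (U.map Complex.ofReal)ᴴ * (U.map Complex.ofReal) = 1 :=
    mul_eq_one_comm.mp hUc'
  have hstep : cpowMat U lam z *ᵥ v
      = (U.map Complex.ofReal) *ᵥ (Matrix.diagonal (fun i => (lam i : ℂ) ^ z) *ᵥ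
          ((U.map Complex.ofReal)ᴴ *ᵥ v)) := by
    rw [Matrix.mulVec_mulVec, Matrix.mulVec_mulVec, cpowMat]
  rw [hstep, unitary_mulVec_normsq hUc]
  calc ∑ i, ‖(Matrix.diagonal (fun i => (lam i : ℂ) ^ z) *ᵥ
        ((U.map Complex.ofReal)ᴴ *ᵥ v)) i‖^2
      ≤ K^2 * ∑ i, ‖((U.map Complex.ofReal)ᴴ *ᵥ v) i‖^2 := diag_normsq_le _ hd _
    _ = K^2 * ∑ i, ‖v i‖^2 := by
        rw [unitary_mulVec_normsq (by rwa [Matrix.conjTranspose_conjTranspose]) v]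

lemma cpow_strip_bound {l : ℝ} (hl : 0 < l) {r : ℝ} (hr0 : 0 ≤ r) (hr1 : r ≤ 1) {z : ℂ}
    (hz : z.re = r) : ‖(l : ℂ) ^ z‖ ≤ max 1 l := by
  rw [Complex.norm_cpow_eq_rpow_re_of_pos hl, hz]
  rcases le_total l 1 with h | h
  · exact le_trans (Real.rpow_le_one hl.le h hr0) (le_max_left _ _)
  · calc l ^ r ≤ l ^ (1:ℝ) := Real.rpow_le_rpow_of_exponent_le h hr1
      _ = l := Real.rpow_one l
      _ ≤ max 1 l := le_max_right _ _

lemma cpowMat_entry_diff (hlam : ∀ i, 0 < lam i) (i j : Fin k) :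
    Differentiable ℂ (fun z => cpowMat U lam z i j) := by
  simp only [cpowMat, Matrix.mul_assoc, Matrix.mul_apply, Matrix.diagonal_apply, ite_mul,
    zero_mul, mul_ite, mul_zero, Finset.sum_ite_eq, Finset.sum_ite_eq', Finset.mem_univ,
    if_true]
  refine Differentiable.fun_sum fun l _ => ?_
  exact (((differentiable_const _).mul (Differentiable.const_cpow differentiable_id
    (Or.inl (Complex.ofReal_ne_zero.mpr (ne_of_gt (hlam l)))))).mul (differentiable_const _))

lemma mrpow_mapC {k : ℕ} {L : Matrix (Fin k) (Fin k) ℝ} (hL : L.PosDef) (t : ℝ) :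
    (mrpow L t).map Complex.ofReal
      = cpowMat (hL.1.eigenvectorUnitary : Matrix (Fin k) (Fin k) ℝ) hL.1.eigenvalues
          (t : ℂ) := by
  rw [mrpow, dif_pos hL.1, mapC_mul, mapC_mul, Matrix.diagonal_map Complex.ofReal_zero,
    map_star_eq_conjTranspose, cpowMat]
  have hfun : (fun i => ((hL.1.eigenvalues i ^ t : ℝ) : ℂ))
      = fun i => ((hL.1.eigenvalues i : ℝ) : ℂ) ^ (t : ℂ) :=
    funext fun i => Complex.ofReal_cpow (hL.eigenvalues_pos i).le t
  rw [hfun]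

lemma posdef_mapC {k : ℕ} {L : Matrix (Fin k) (Fin k) ℝ} (hL : L.PosDef) :
    L.map Complex.ofReal
      = cpowMat (hL.1.eigenvectorUnitary : Matrix (Fin k) (Fin k) ℝ) hL.1.eigenvalues 1 := by
  have hsp := hL.1.spectral_theorem
  rw [Unitary.conjStarAlgAut_apply] at hsp
  rw [RCLike.ofReal_real_eq_id] at hsp
  conv_lhs => rw [hsp]
  rw [mapC_mul, mapC_mul, map_star_eq_conjTranspose, cpowMat]
  rw [Matrix.diagonal_map Complex.ofReal_zero]
  have hfun : (fun i => ((hL.1.eigenvalues i : ℝ) : ℂ))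
      = fun i => ((hL.1.eigenvalues i : ℝ) : ℂ) ^ (1 : ℂ) :=
    funext fun i => (Complex.cpow_one _).symm
  rw [show ((fun m => ((id ∘ hL.1.eigenvalues) m : ℝ) : Fin k → ℂ))
    = fun i => ((hL.1.eigenvalues i : ℝ) : ℂ) from rfl, hfun]

end CpowMat

/-- Matrix Cauchy–Schwarz for the spectral norm:
`‖L^α M R^{1−α}‖_op ≤ ‖LM‖_op^α ‖MR‖_op^{1−α}`. -/
theorem stmt4 {m n : ℕ} (M : Matrix (Fin m) (Fin n) ℝ)
    {L : Matrix (Fin m) (Fin m) ℝ} {R : Matrix (Fin n) (Fin n) ℝ}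
    (hL : L.PosDef) (hR : R.PosDef) {α : ℝ} (hα0 : 0 ≤ α) (hα1 : α ≤ 1) :
    opNorm (mrpow L α * M * mrpow R (1 - α)) ≤
      opNorm (L * M) ^ α * opNorm (M * R) ^ (1 - α) := by
  classical
  have hRHS : 0 ≤ opNorm (L * M) ^ α * opNorm (M * R) ^ (1 - α) :=
    mul_nonneg (Real.rpow_nonneg (opNorm_nonneg _) _) (Real.rpow_nonneg (opNorm_nonneg _) _)
  rcases Nat.eq_zero_or_pos n with hn | hn
  · subst hn
    have h0 : opNorm (mrpow L α * M * mrpow R (1 - α)) = 0 := by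
      rw [opNorm, iSup, Set.range_eq_empty, Real.sSup_empty]
    rw [h0]; exact hRHS
  haveI hne : Nonempty (Fin n) := ⟨⟨0, hn⟩⟩
  set T : Matrix (Fin m) (Fin n) ℝ := mrpow L α * M * mrpow R (1 - α) with hT
  obtain ⟨u, hu1, hu2⟩ := exists_extremal T
  rcases eq_or_lt_of_le (opNorm_nonneg T) with hs0 | hs
  · rw [← hs0]; exact hRHS
  set s : ℝ := opNorm T with hsdef
  have hsne : s ≠ 0 := ne_of_gt hs
  set y0 : Fin m → ℝ := fun i => s⁻¹ * (T *ᵥ u) i with hy0def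
  have hy0y0 : y0 ⬝ᵥ y0 = 1 := by
    have e : y0 ⬝ᵥ y0 = s⁻¹ * s⁻¹ * ((T *ᵥ u) ⬝ᵥ (T *ᵥ u)) := by
      simp only [hy0def, dotProduct, Finset.mul_sum]
      exact Finset.sum_congr rfl fun i _ => by ring
    rw [e, hu2]
    field_simp
  have hy0Tu : y0 ⬝ᵥ (T *ᵥ u) = s := by
    have e : y0 ⬝ᵥ (T *ᵥ u) = s⁻¹ * ((T *ᵥ u) ⬝ᵥ (T *ᵥ u)) := by
      simp only [hy0def, dotProduct, Finset.mul_sum]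
      exact Finset.sum_congr rfl fun i _ => by ring
    rw [e, hu2]
    field_simp
  set x : Fin n → ℂ := fun j => ((u j : ℝ) : ℂ) with hxdef
  set y : Fin m → ℂ := fun i => ((y0 i : ℝ) : ℂ) with hydef
  have hx : ∑ j, ‖x j‖^2 = 1 := by
    calc ∑ j, ‖x j‖^2 = ∑ j, u j * u j := by
          refine Finset.sum_congr rfl fun j _ => ?_
          rw [hxdef]
          rw [Complex.norm_real, Real.norm_eq_abs, pow_two, abs_mul_abs_self]
      _ = u ⬝ᵥ u := rfl
      _ = 1 := hu1
  have hy : ∑ i, ‖y i‖^2 = 1 := by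
    calc ∑ i, ‖y i‖^2 = ∑ i, y0 i * y0 i := by
          refine Finset.sum_congr rfl fun i _ => ?_
          rw [hydef]
          rw [Complex.norm_real, Real.norm_eq_abs, pow_two, abs_mul_abs_self]
      _ = y0 ⬝ᵥ y0 := rfl
      _ = 1 := hy0y0
  set UL : Matrix (Fin m) (Fin m) ℝ := (hL.1.eigenvectorUnitary : Matrix (Fin m) (Fin m) ℝ)
    with hULdef
  set lamL : Fin m → ℝ := hL.1.eigenvalues with hlamLdef
  set UR : Matrix (Fin n) (Fin n) ℝ := (hR.1.eigenvectorUnitary : Matrix (Fin n) (Fin n) ℝ)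
    with hURdef
  set lamR : Fin n → ℝ := hR.1.eigenvalues with hlamRdef
  have hUL : UL * star UL = 1 := Matrix.mem_unitaryGroup_iff.mp hL.1.eigenvectorUnitary.2
  have hUL' : star UL * UL = 1 := Matrix.mem_unitaryGroup_iff'.mp hL.1.eigenvectorUnitary.2
  have hUR : UR * star UR = 1 := Matrix.mem_unitaryGroup_iff.mp hR.1.eigenvectorUnitary.2
  have hUR' : star UR * UR = 1 := Matrix.mem_unitaryGroup_iff'.mp hR.1.eigenvectorUnitary.2
  have hlamL : ∀ i, 0 < lamL i := fun i => hL.eigenvalues_pos i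
  have hlamR : ∀ i, 0 < lamR i := fun i => hR.eigenvalues_pos i
  have hLc : L.map Complex.ofReal = cpowMat UL lamL 1 := by
    rw [hULdef, hlamLdef]; exact posdef_mapC hL
  have hRc : R.map Complex.ofReal = cpowMat UR lamR 1 := by
    rw [hURdef, hlamRdef]; exact posdef_mapC hR
  set f : ℂ → ℂ := fun z =>
    star y ⬝ᵥ ((cpowMat UL lamL z * M.map Complex.ofReal * cpowMat UR lamR (1 - z)) *ᵥ x)
    with hfdef
  have ha : ∀ z ∈ Complex.re ⁻¹' {0}, ‖f z‖ ≤ opNorm (M * R) := by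
    intro z hz
    have hz0 : z.re = 0 := hz
    have e : cpowMat UL lamL z * M.map Complex.ofReal * cpowMat UR lamR (1 - z)
        = cpowMat UL lamL z * (M * R).map Complex.ofReal * cpowMat UR lamR (-z) := by
      rw [show (1 : ℂ) - z = 1 + (-z) by ring, ← cpowMat_mul hUR' hlamR 1 (-z),
        ← hRc, mapC_mul]
      simp only [Matrix.mul_assoc]
    simp only [hfdef]
    rw [e]
    exact pairing_bound (M * R) (cpowMat_unitary hUL hlamL hz0)
      (cpowMat_unitary hUR hlamR (by simp [Complex.neg_re, hz0])) hy hx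
  have hb : ∀ z ∈ Complex.re ⁻¹' {1}, ‖f z‖ ≤ opNorm (L * M) := by
    intro z hz
    have hz1 : z.re = 1 := hz
    have eL : cpowMat UL lamL z = cpowMat UL lamL (z - 1) * cpowMat UL lamL 1 := by
      rw [cpowMat_mul hUL' hlamL (z - 1) 1, sub_add_cancel]
    have e : cpowMat UL lamL z * M.map Complex.ofReal * cpowMat UR lamR (1 - z)
        = cpowMat UL lamL (z - 1) * (L * M).map Complex.ofReal * cpowMat UR lamR (1 - z) := by
      rw [eL, ← hLc, mapC_mul]
      simp only [Matrix.mul_assoc]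
    simp only [hfdef]
    rw [e]
    exact pairing_bound (L * M)
      (cpowMat_unitary hUL hlamL (by simp [Complex.sub_re, Complex.one_re, hz1]))
      (cpowMat_unitary hUR hlamR (by simp [Complex.sub_re, Complex.one_re, hz1])) hy hx
  have hdiff : Differentiable ℂ f := by
    rw [hfdef]
    simp only [Matrix.mulVec, dotProduct]
    refine Differentiable.fun_sum fun i _ => ?_
    refine Differentiable.const_mul ?_ _
    refine Differentiable.fun_sum fun j _ => ?_
    refine Differentiable.mul_const ?_ _
    simp only [Matrix.mul_apply]
    refine Differentiable.fun_sum fun p _ => ?_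
    refine Differentiable.mul ?_ ?_
    · refine Differentiable.fun_sum fun q _ => ?_
      exact (cpowMat_entry_diff hlamL i q).mul_const _
    · exact (cpowMat_entry_diff hlamR p j).comp ((differentiable_const (1:ℂ)).sub differentiable_id)
  have hB : BddAbove ((norm ∘ f) '' (Complex.HadamardThreeLines.verticalClosedStrip 0 1)) := by
    set KL : ℝ := 1 + ∑ i, lamL i with hKLdef
    set KR : ℝ := 1 + ∑ i, lamR i with hKRdef
    have hKL0 : 0 ≤ KL := by
      have : 0 ≤ ∑ i, lamL i := Finset.sum_nonneg fun i _ => (hlamL i).le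
      rw [hKLdef]; linarith
    have hKR0 : 0 ≤ KR := by
      have : 0 ≤ ∑ i, lamR i := Finset.sum_nonneg fun i _ => (hlamR i).le
      rw [hKRdef]; linarith
    have hKLb : ∀ (i : Fin m) (z : ℂ), z.re ∈ Set.Icc (0:ℝ) 1 → ‖(lamL i : ℂ) ^ z‖ ≤ KL := by
      intro i z hzz
      refine le_trans (cpow_strip_bound (hlamL i) hzz.1 hzz.2 rfl) (max_le ?_ ?_)
      · have : 0 ≤ ∑ i, lamL i := Finset.sum_nonneg fun i _ => (hlamL i).le
        rw [hKLdef]; linarith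
      · have h1 : lamL i ≤ ∑ j, lamL j :=
          Finset.single_le_sum (fun j _ => (hlamL j).le) (Finset.mem_univ i)
        rw [hKLdef]; linarith
    have hKRb : ∀ (i : Fin n) (z : ℂ), z.re ∈ Set.Icc (0:ℝ) 1 → ‖(lamR i : ℂ) ^ z‖ ≤ KR := by
      intro i z hzz
      refine le_trans (cpow_strip_bound (hlamR i) hzz.1 hzz.2 rfl) (max_le ?_ ?_)
      · have : 0 ≤ ∑ i, lamR i := Finset.sum_nonneg fun i _ => (hlamR i).le
        rw [hKRdef]; linarith
      · have h1 : lamR i ≤ ∑ j, lamR j :=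
          Finset.single_le_sum (fun j _ => (hlamR j).le) (Finset.mem_univ i)
        rw [hKRdef]; linarith
    refine ⟨KL * opNorm M * KR, ?_⟩
    rintro b ⟨z, hz, rfl⟩
    simp only [Function.comp_apply]
    have hzre : z.re ∈ Set.Icc (0:ℝ) 1 := hz
    have hstep : (cpowMat UL lamL z * M.map Complex.ofReal * cpowMat UR lamR (1 - z)) *ᵥ x
        = cpowMat UL lamL z *ᵥ ((M.map Complex.ofReal) *ᵥ (cpowMat UR lamR (1 - z) *ᵥ x)) := by
      rw [Matrix.mulVec_mulVec, Matrix.mulVec_mulVec]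
    have c1 : ∑ j, ‖(cpowMat UR lamR (1 - z) *ᵥ x) j‖^2 ≤ KR^2 := by
      have hd1 : ∀ i, ‖(lamR i : ℂ) ^ (1 - z)‖ ≤ KR := by
        intro i
        refine hKRb i (1 - z) ?_
        constructor
        · simp only [Complex.sub_re, Complex.one_re]
          linarith [hzre.2]
        · simp only [Complex.sub_re, Complex.one_re]
          linarith [hzre.1]
      have h := cpow_normsq_le hUR hd1 x
      rwa [hx, mul_one] at h
    have c2 : ∑ i2, ‖((M.map Complex.ofReal) *ᵥ (cpowMat UR lamR (1 - z) *ᵥ x)) i2‖^2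
        ≤ opNorm M ^ 2 * KR^2 :=
      le_trans (real_mulVec_normsq_le M _) (mul_le_mul_of_nonneg_left c1 (sq_nonneg _))
    have c3 : ∑ i2, ‖(cpowMat UL lamL z *ᵥ
          ((M.map Complex.ofReal) *ᵥ (cpowMat UR lamR (1 - z) *ᵥ x))) i2‖^2
        ≤ KL^2 * (opNorm M ^ 2 * KR^2) :=
      le_trans (cpow_normsq_le hUL (fun i => hKLb i z hzre) _)
        (mul_le_mul_of_nonneg_left c2 (sq_nonneg _))
    calc ‖f z‖
        = ‖star y ⬝ᵥ (cpowMat UL lamL z *ᵥ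
            ((M.map Complex.ofReal) *ᵥ (cpowMat UR lamR (1 - z) *ᵥ x)))‖ := by
          simp only [hfdef]
          rw [hstep]
      _ ≤ Real.sqrt (∑ i, ‖y i‖^2) * Real.sqrt (∑ i2, ‖(cpowMat UL lamL z *ᵥ
            ((M.map Complex.ofReal) *ᵥ (cpowMat UR lamR (1 - z) *ᵥ x))) i2‖^2) :=
          cs_bound _ _
      _ = Real.sqrt (∑ i2, ‖(cpowMat UL lamL z *ᵥ
            ((M.map Complex.ofReal) *ᵥ (cpowMat UR lamR (1 - z) *ᵥ x))) i2‖^2) := by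
          rw [hy, Real.sqrt_one, one_mul]
      _ ≤ Real.sqrt (KL^2 * (opNorm M ^ 2 * KR^2)) := Real.sqrt_le_sqrt c3
      _ = KL * opNorm M * KR := by
          rw [show KL^2 * (opNorm M ^ 2 * KR^2) = (KL * opNorm M * KR)^2 by ring,
            Real.sqrt_sq (mul_nonneg (mul_nonneg hKL0 (opNorm_nonneg M)) hKR0)]
  have hPLα : cpowMat UL lamL ((α : ℝ) : ℂ) = (mrpow L α).map Complex.ofReal := by
    rw [hULdef, hlamLdef]; exact (mrpow_mapC hL α).symm
  have hPRα : cpowMat UR lamR (1 - ((α : ℝ) : ℂ)) = (mrpow R (1 - α)).map Complex.ofReal := by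
    rw [show (1 - ((α : ℝ) : ℂ)) = (((1 - α : ℝ)) : ℂ) by push_cast; ring, hURdef, hlamRdef]
    exact (mrpow_mapC hR (1 - α)).symm
  have hfα : f ((α : ℝ) : ℂ) = (s : ℂ) := by
    simp only [hfdef]
    rw [hPLα, hPRα, ← mapC_mul, ← mapC_mul, ← hT]
    have e3 : (T.map Complex.ofReal) *ᵥ x = fun i => (((T *ᵥ u) i : ℝ) : ℂ) := by
      funext i
      simp only [hxdef, Matrix.mulVec, dotProduct, Matrix.map_apply]
      push_cast
      rfl
    rw [e3]
    have e4 : star y ⬝ᵥ (fun i => (((T *ᵥ u) i : ℝ) : ℂ)) = ((y0 ⬝ᵥ (T *ᵥ u) : ℝ) : ℂ) := by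
      simp only [dotProduct, hydef, Pi.star_apply, Complex.star_def, Complex.conj_ofReal]
      push_cast
      rfl
    rw [e4, hy0Tu]
  have hmem : ((α : ℝ) : ℂ) ∈ Complex.HadamardThreeLines.verticalClosedStrip 0 1 := by
    simp only [Complex.HadamardThreeLines.verticalClosedStrip, Set.mem_preimage,
      Complex.ofReal_re, Set.mem_Icc]
    exact ⟨hα0, hα1⟩
  have h3 := Complex.HadamardThreeLines.norm_le_interp_of_mem_verticalClosedStrip₀₁' f hmem
    hdiff.diffContOnCl hB ha hb
  rw [hfα, Complex.ofReal_re] at h3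
  have h4 : ‖(s : ℂ)‖ = s := by
    rw [Complex.norm_real, Real.norm_eq_abs, abs_of_pos hs]
  rw [h4] at h3
  rw [mul_comm]
  exact h3

end Paper
end
end

section
/- Let θ, β satisfy 0 < θ ≤ β ≤ √θ < 1, and let G_1,...,G_k ∈ R^{m×n}. Define M_k = (1−θ) Σ_{t=1}^k θ^{k−t} G_t and L_k = (1−β) Σ_{t=1}^k β^{k−t} G_t G_tᵀ. Then for every y ∈ R^m, yᵀ M_k M_kᵀ y ≤ 4 yᵀ L_k y, and hence M_k M_kᵀ ⪯ 4 L_k. -/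
open Matrix BigOperators

noncomputable section

namespace Paper

lemma sum_mulVec' {m n : ℕ} {ι : Type*} (s : Finset ι) (A : ι → Matrix (Fin m) (Fin n) ℝ)
    (v : Fin n → ℝ) : (∑ i ∈ s, A i) *ᵥ v = ∑ i ∈ s, (A i) *ᵥ v := by
  ext j
  simp [Matrix.mulVec, dotProduct, Matrix.sum_apply, Finset.sum_mul]
  rw [Finset.sum_comm]

lemma dot_sum' {m : ℕ} {ι : Type*} (s : Finset ι) (v : ι → (Fin m → ℝ)) (y : Fin m → ℝ) :
    y ⬝ᵥ (∑ i ∈ s, v i) = ∑ i ∈ s, y ⬝ᵥ v i := by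
  simp [dotProduct, Finset.sum_apply, Finset.mul_sum]
  rw [Finset.sum_comm]

lemma dot_eq_norm_sq {n : ℕ} (x : Fin n → ℝ) :
    x ⬝ᵥ x = ‖WithLp.toLp 2 x‖ ^ 2 := by
  rw [EuclideanSpace.norm_eq, Real.sq_sqrt (by positivity)]
  simp [dotProduct, sq_abs, ← sq]

lemma geom_reindex (r : ℝ) (k : ℕ) :
    ∑ t ∈ Finset.Icc 1 k, r ^ (k - t) = ∑ j ∈ Finset.range k, r ^ j := by
  rw [← Finset.Ico_add_one_right_eq_Icc, Finset.sum_Ico_eq_sum_range]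
  have h1 : k + 1 - 1 = k := by omega
  rw [h1, ← Finset.sum_range_reflect (fun j => r ^ j) k]
  refine Finset.sum_congr rfl fun i hi => ?_
  simp only [Finset.mem_range] at hi
  congr 1
  omega

lemma sum_bound {θ β : ℝ} (hθ : 0 < θ) (hθβ : θ ≤ β) (hβ : β ≤ Real.sqrt θ)
    (hβ1 : Real.sqrt θ < 1) (k : ℕ) :
    ∑ t ∈ Finset.Icc 1 k, ((1 - θ) * θ ^ (k - t)) ^ 2 / ((1 - β) * β ^ (k - t)) ≤ 4 := by
  have hs : Real.sqrt θ ^ 2 = θ := Real.sq_sqrt hθ.le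
  have hsn : 0 ≤ Real.sqrt θ := Real.sqrt_nonneg θ
  have hθ1 : θ < 1 := by nlinarith
  have hβ0 : 0 < β := hθ.trans_le hθβ
  have hβlt1 : β < 1 := lt_of_le_of_lt hβ hβ1
  set r : ℝ := θ ^ 2 / β with hrdef
  have hr0 : 0 ≤ r := by positivity
  have hrβ : r ≤ β := by
    rw [hrdef, div_le_iff₀ hβ0]; nlinarith
  have hr1 : r < 1 := lt_of_le_of_lt hrβ hβlt1
  have h2β : 2 * β ≤ 1 + θ := by nlinarith [sq_nonneg (1 - Real.sqrt θ)]
  have hterm : ∀ t, ((1 - θ) * θ ^ (k - t)) ^ 2 / ((1 - β) * β ^ (k - t))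
      = (1 - θ) ^ 2 / (1 - β) * r ^ (k - t) := by
    intro t
    have hb : (0:ℝ) < β ^ (k - t) := pow_pos hβ0 _
    have h1β : (1:ℝ) - β ≠ 0 := by linarith
    rw [hrdef, div_pow, mul_pow, ← pow_mul, mul_comm (k-t) 2, pow_mul, mul_div_mul_comm]
  calc ∑ t ∈ Finset.Icc 1 k, ((1 - θ) * θ ^ (k - t)) ^ 2 / ((1 - β) * β ^ (k - t))
      = (1 - θ) ^ 2 / (1 - β) * ∑ t ∈ Finset.Icc 1 k, r ^ (k - t) := by
        rw [Finset.mul_sum]; exact Finset.sum_congr rfl fun t _ => hterm t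
    _ ≤ (1 - θ) ^ 2 / (1 - β) * (1 / (1 - β)) := by
        apply mul_le_mul_of_nonneg_left _ (div_nonneg (sq_nonneg _) (by linarith))
        rw [geom_reindex]
        have h1 : ∑ j ∈ Finset.range k, r ^ j = (1 - r ^ k) / (1 - r) := by
          rw [geom_sum_eq (by linarith : r ≠ 1)]
          rw [div_eq_div_iff (by linarith) (by linarith)]
          ring
        rw [h1]
        have hrk : 0 ≤ r ^ k := pow_nonneg hr0 k
        calc (1 - r ^ k) / (1 - r) ≤ 1 / (1 - r) := by
              apply div_le_div_of_nonneg_right ?_ (by linarith)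
              linarith
          _ ≤ 1 / (1 - β) := by
              apply one_div_le_one_div_of_le (by linarith) (by linarith)
    _ ≤ 4 := by
        rw [div_mul_div_comm, div_le_iff₀ (by nlinarith)]
        nlinarith



theorem stmt9_aux {m n : ℕ} {θ β : ℝ} (hθ : 0 < θ) (hθβ : θ ≤ β)
    (hβ : β ≤ Real.sqrt θ) (hβ1 : Real.sqrt θ < 1)
    (G : ℕ → Matrix (Fin m) (Fin n) ℝ) (k : ℕ) (hk : 1 ≤ k)
    (M : Matrix (Fin m) (Fin n) ℝ) (Lk : Matrix (Fin m) (Fin m) ℝ)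
    (hM : M = (1 - θ) • ∑ t ∈ Finset.Icc 1 k, θ ^ (k - t) • G t)
    (hL : Lk = (1 - β) • ∑ t ∈ Finset.Icc 1 k, β ^ (k - t) • (G t * (G t)ᴴ)) :
    (∀ y : Fin m → ℝ, y ⬝ᵥ ((M * Mᴴ) *ᵥ y) ≤ 4 * (y ⬝ᵥ (Lk *ᵥ y))) := by
  have hs : Real.sqrt θ ^ 2 = θ := Real.sq_sqrt hθ.le
  have hsn : 0 ≤ Real.sqrt θ := Real.sqrt_nonneg θ
  have hθ1 : θ < 1 := by nlinarith
  have hβ0 : 0 < β := hθ.trans_le hθβ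
  have hβlt1 : β < 1 := lt_of_le_of_lt hβ hβ1
  intro y
  set S := Finset.Icc 1 k with hS
  set U0 : ℕ → (Fin n → ℝ) := fun t => (G t)ᴴ *ᵥ y with hU0
  set U : ℕ → EuclideanSpace ℝ (Fin n) := fun t => WithLp.toLp 2 (U0 t) with hU
  set W : EuclideanSpace ℝ (Fin n) := WithLp.toLp 2 (Mᴴ *ᵥ y) with hWdef
  set c : ℕ → ℝ := fun t => (1 - θ) * θ ^ (k - t) with hc
  set d : ℕ → ℝ := fun t => (1 - β) * β ^ (k - t) with hd
  have hdpos : ∀ t, 0 < d t := fun t => mul_pos (by linarith) (pow_pos hβ0 _)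
  -- W as combination of U's
  have hW : W = (1 - θ) • ∑ t ∈ S, θ ^ (k - t) • U t := by
    have hW0 : Mᴴ *ᵥ y = ((1 - θ) • ∑ t ∈ S, θ ^ (k - t) • ((G t)ᴴ *ᵥ y) : Fin n → ℝ) := by
     rw [hM, conjTranspose_smul, conjTranspose_sum]
     simp only [conjTranspose_smul, star_trivial]
     rw [smul_mulVec, sum_mulVec']
     congr 1
     exact Finset.sum_congr rfl fun t _ => smul_mulVec _ _ _
    rw [hWdef, hW0, WithLp.toLp_smul, WithLp.toLp_sum]
    simp only [WithLp.toLp_smul, hU, hU0]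
  -- LHS as W ⬝ᵥ W
  have hlhs : y ⬝ᵥ ((M * Mᴴ) *ᵥ y) = (Mᴴ *ᵥ y) ⬝ᵥ (Mᴴ *ᵥ y) := by
    rw [← mulVec_mulVec, dotProduct_mulVec]
    congr 1
    rw [← mulVec_transpose, conjTranspose_eq_transpose_of_trivial]
  have hper : ∀ t, y ⬝ᵥ ((G t * (G t)ᴴ) *ᵥ y) = U0 t ⬝ᵥ U0 t := by
    intro t
    rw [← mulVec_mulVec, dotProduct_mulVec, ← mulVec_transpose,
      ← conjTranspose_eq_transpose_of_trivial]
  -- RHS expansion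
  have hrhs : y ⬝ᵥ (Lk *ᵥ y) = ∑ t ∈ S, d t * (U0 t ⬝ᵥ U0 t) := by
    rw [hL, smul_mulVec, sum_mulVec', dotProduct_smul, dot_sum', smul_eq_mul,
      Finset.mul_sum]
    refine Finset.sum_congr rfl fun t _ => ?_
    rw [smul_mulVec, dotProduct_smul, smul_eq_mul, hper t, hd]
    ring
  -- norm bound on W
  have hθpow : ∀ t : ℕ, (0:ℝ) ≤ θ ^ (k - t) := fun t => pow_nonneg hθ.le _
  have hWnorm : ‖W‖ ≤ ∑ t ∈ S, c t * ‖U t‖ := by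
    rw [hW, norm_smul, Real.norm_eq_abs, abs_of_nonneg (by linarith)]
    calc (1 - θ) * ‖∑ t ∈ S, θ ^ (k - t) • U t‖
        ≤ (1 - θ) * ∑ t ∈ S, ‖θ ^ (k - t) • U t‖ :=
          mul_le_mul_of_nonneg_left (norm_sum_le _ _) (by linarith)
      _ = ∑ t ∈ S, c t * ‖U t‖ := by
          rw [Finset.mul_sum]
          refine Finset.sum_congr rfl fun t _ => ?_
          rw [norm_smul, Real.norm_eq_abs, abs_of_nonneg (hθpow t), hc]
          ring
  -- Cauchy-Schwarz
  have hCS : (∑ t ∈ S, c t * ‖U t‖) ^ 2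
      ≤ (∑ t ∈ S, c t ^ 2 / d t) * (∑ t ∈ S, d t * ‖U t‖ ^ 2) := by
    have h := Finset.sum_mul_sq_le_sq_mul_sq S (fun t => c t / Real.sqrt (d t))
      (fun t => Real.sqrt (d t) * ‖U t‖)
    have e1 : ∀ t ∈ S, c t / Real.sqrt (d t) * (Real.sqrt (d t) * ‖U t‖) = c t * ‖U t‖ := by
      intro t _
      have : Real.sqrt (d t) ≠ 0 := ne_of_gt (Real.sqrt_pos.mpr (hdpos t))
      field_simp
    have e2 : ∀ t ∈ S, (c t / Real.sqrt (d t)) ^ 2 = c t ^ 2 / d t := by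
      intro t _
      rw [div_pow, Real.sq_sqrt (hdpos t).le]
    have e3 : ∀ t ∈ S, (Real.sqrt (d t) * ‖U t‖) ^ 2 = d t * ‖U t‖ ^ 2 := by
      intro t _
      rw [mul_pow, Real.sq_sqrt (hdpos t).le]
    rw [Finset.sum_congr rfl e1, Finset.sum_congr rfl e2, Finset.sum_congr rfl e3] at h
    exact h
  have hsum4 : ∑ t ∈ S, c t ^ 2 / d t ≤ 4 := sum_bound hθ hθβ hβ hβ1 k
  have hUnn : (0:ℝ) ≤ ∑ t ∈ S, d t * ‖U t‖ ^ 2 :=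
    Finset.sum_nonneg fun t _ => mul_nonneg (hdpos t).le (sq_nonneg _)
  calc y ⬝ᵥ ((M * Mᴴ) *ᵥ y) = ‖W‖ ^ 2 := by rw [hlhs]; exact dot_eq_norm_sq _
    _ ≤ (∑ t ∈ S, c t * ‖U t‖) ^ 2 := by
        apply pow_le_pow_left₀ (norm_nonneg _) hWnorm
    _ ≤ (∑ t ∈ S, c t ^ 2 / d t) * (∑ t ∈ S, d t * ‖U t‖ ^ 2) := hCS
    _ ≤ 4 * (∑ t ∈ S, d t * ‖U t‖ ^ 2) := mul_le_mul_of_nonneg_right hsum4 hUnn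
    _ = 4 * (y ⬝ᵥ (Lk *ᵥ y)) := by
        rw [hrhs]
        congr 1
        exact Finset.sum_congr rfl fun t _ => by rw [dot_eq_norm_sq (U0 t)]


/-- Momentum bound: `M_k M_kᵀ ⪯ 4 L_k` for the exponential moving averages. -/
theorem stmt9 {m n : ℕ} {θ β : ℝ} (hθ : 0 < θ) (hθβ : θ ≤ β)
    (hβ : β ≤ Real.sqrt θ) (hβ1 : Real.sqrt θ < 1)
    (G : ℕ → Matrix (Fin m) (Fin n) ℝ) (k : ℕ) (hk : 1 ≤ k)
    (M : Matrix (Fin m) (Fin n) ℝ) (Lk : Matrix (Fin m) (Fin m) ℝ)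
    (hM : M = (1 - θ) • ∑ t ∈ Finset.Icc 1 k, θ ^ (k - t) • G t)
    (hL : Lk = (1 - β) • ∑ t ∈ Finset.Icc 1 k, β ^ (k - t) • (G t * (G t)ᴴ)) :
    (∀ y : Fin m → ℝ, y ⬝ᵥ ((M * Mᴴ) *ᵥ y) ≤ 4 * (y ⬝ᵥ (Lk *ᵥ y))) ∧
      ((4 : ℝ) • Lk - M * Mᴴ).PosSemidef := by
  have h1 : ∀ y : Fin m → ℝ, y ⬝ᵥ ((M * Mᴴ) *ᵥ y) ≤ 4 * (y ⬝ᵥ (Lk *ᵥ y)) :=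
    stmt9_aux hθ hθβ hβ hβ1 G k hk M Lk hM hL
  refine ⟨h1, posSemidef_iff_dotProduct_mulVec.mpr ⟨?_, ?_⟩⟩
  · -- Hermitian
    have hMh : (M * Mᴴ).IsHermitian := isHermitian_mul_conjTranspose_self M
    have hGt : ∀ t, (G t * (G t)ᴴ).IsHermitian := fun t =>
      isHermitian_mul_conjTranspose_self _
    have hLh : Lk.IsHermitian := by
      rw [hL]
      show _ᴴ = _
      rw [conjTranspose_smul, star_trivial, conjTranspose_sum]
      congr 1
      refine Finset.sum_congr rfl fun t _ => ?_
      rw [conjTranspose_smul, star_trivial, hGt t]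
    have h4 : ((4:ℝ) • Lk).IsHermitian := by
      show _ᴴ = _
      rw [conjTranspose_smul, star_trivial, hLh]
    exact h4.sub hMh
  · intro x
    have hx : star x = x := by ext i; simp
    rw [hx, sub_mulVec, dotProduct_sub, smul_mulVec, dotProduct_smul, smul_eq_mul]
    have := h1 x
    linarith


end Paper
end
end

section
/- Let X ∈ R^{m×n}, and let L ∈ R^{m×m}, R ∈ R^{n×n} be symmetric positive definite, with p,q > 0 satisfying 1/p + 1/q = 1. Then ‖L^{1/(4p)} X R^{1/(4q)}‖_F² ≤ ‖X‖_op² · ((1/p) tr(L^{1/2}) + (1/q) tr(R^{1/2})). -/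
open Matrix BigOperators

noncomputable section

namespace Paper

lemma sumsq_eq_dot {k : ℕ} (v : Fin k → ℝ) : ∑ i, v i ^ 2 = v ⬝ᵥ v := by
  simp [dotProduct, pow_two]

lemma sumsq_star_mulVec {k : ℕ} (U : Matrix.unitaryGroup (Fin k) ℝ) (w : Fin k → ℝ) :
    ∑ i, ((star (U : Matrix (Fin k) (Fin k) ℝ)) *ᵥ w) i ^ 2 = ∑ i, w i ^ 2 := by
  have h1 : (U : Matrix (Fin k) (Fin k) ℝ) * star (U : Matrix (Fin k) (Fin k) ℝ) = 1 :=
    U.2.2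
  have hT : (star (U : Matrix (Fin k) (Fin k) ℝ))ᵀ = (U : Matrix (Fin k) (Fin k) ℝ) := by
    rw [Matrix.star_eq_conjTranspose, Matrix.conjTranspose_eq_transpose_of_trivial,
      Matrix.transpose_transpose]
  rw [sumsq_eq_dot, sumsq_eq_dot, Matrix.dotProduct_mulVec]
  have h2 : (star (U : Matrix (Fin k) (Fin k) ℝ) *ᵥ w) ᵥ* star (U : Matrix (Fin k) (Fin k) ℝ)
      = w := by
    rw [← Matrix.mulVec_transpose, Matrix.mulVec_mulVec, hT, h1, Matrix.one_mulVec]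
  rw [h2]

lemma sumsq_mulVec_le {m n : ℕ} (X : Matrix (Fin m) (Fin n) ℝ) (x : Fin n → ℝ) :
    ∑ i, (X *ᵥ x) i ^ 2 ≤ opNorm X ^ 2 * ∑ j, x j ^ 2 := by
  classical
  set hH := Matrix.isHermitian_conjTranspose_mul_self X with hHdef
  set W := hH.eigenvectorUnitary with hW
  set lam := hH.eigenvalues with hlam
  set y := (star (W : Matrix (Fin n) (Fin n) ℝ)) *ᵥ x with hy
  have hspec : Xᴴ * X = (W : Matrix (Fin n) (Fin n) ℝ) * Matrix.diagonal (fun i => lam i)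
      * star (W : Matrix (Fin n) (Fin n) ℝ) := by
    have := hH.spectral_theorem
    refine this.trans ?_
    rw [Unitary.conjStarAlgAut_apply]
    rfl
  have key : ∑ i, (X *ᵥ x) i ^ 2 = ∑ i, lam i * y i ^ 2 := by
    rw [sumsq_eq_dot, Matrix.dotProduct_mulVec]
    rw [show X *ᵥ x = x ᵥ* Xᵀ from (Matrix.vecMul_transpose X x).symm]
    rw [Matrix.vecMul_vecMul]
    rw [show Xᵀ * X = Xᴴ * X by rw [Matrix.conjTranspose_eq_transpose_of_trivial]]
    rw [hspec, ← Matrix.vecMul_vecMul, ← Matrix.vecMul_vecMul]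
    rw [show x ᵥ* (W : Matrix (Fin n) (Fin n) ℝ) = y from by
      rw [hy, ← Matrix.vecMul_transpose, Matrix.star_eq_conjTranspose,
        Matrix.conjTranspose_eq_transpose_of_trivial, Matrix.transpose_transpose]]
    rw [show (y ᵥ* Matrix.diagonal (fun i => lam i)) ᵥ* star (W : Matrix (Fin n) (Fin n) ℝ) ⬝ᵥ x
        = (y ᵥ* Matrix.diagonal (fun i => lam i)) ⬝ᵥ (star (W : Matrix (Fin n) (Fin n) ℝ) *ᵥ x)
      from (Matrix.dotProduct_mulVec _ _ _).symm, ← hy]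
    simp [Matrix.vecMul_diagonal, dotProduct]
    exact Finset.sum_congr rfl fun i _ => by ring
  rw [key]
  have hlam_le : ∀ i, lam i ≤ opNorm X ^ 2 := by
    intro i
    have h0 : 0 ≤ lam i := Matrix.eigenvalues_conjTranspose_mul_self_nonneg X i
    have h1 : Real.sqrt (lam i) ≤ opNorm X :=
      le_ciSup (f := singVals X) (Set.Finite.bddAbove (Set.finite_range _)) i
    have h2 := pow_le_pow_left₀ (Real.sqrt_nonneg _) h1 2
    rwa [Real.sq_sqrt h0] at h2
  calc ∑ i, lam i * y i ^ 2 ≤ ∑ i, opNorm X ^ 2 * y i ^ 2 :=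
        Finset.sum_le_sum fun i _ => mul_le_mul_of_nonneg_right (hlam_le i) (sq_nonneg _)
    _ = opNorm X ^ 2 * ∑ i, y i ^ 2 := by rw [Finset.mul_sum]
    _ = opNorm X ^ 2 * ∑ j, x j ^ 2 := by rw [sumsq_star_mulVec]

lemma sumsq_transpose_mulVec_le {m n : ℕ} (X : Matrix (Fin m) (Fin n) ℝ) (u : Fin m → ℝ) :
    ∑ j, (Xᵀ *ᵥ u) j ^ 2 ≤ opNorm X ^ 2 * ∑ i, u i ^ 2 := by
  set s := ∑ j, (Xᵀ *ᵥ u) j ^ 2 with hs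
  have hs0 : 0 ≤ s := Finset.sum_nonneg fun i _ => sq_nonneg _
  rcases eq_or_lt_of_le hs0 with h | h
  · rw [← h]; positivity
  · have h1 : s = (X *ᵥ (Xᵀ *ᵥ u)) ⬝ᵥ u := by
      rw [hs, sumsq_eq_dot, Matrix.dotProduct_mulVec, Matrix.vecMul_transpose]
    have h2 : s ^ 2 ≤ (∑ i, (X *ᵥ (Xᵀ *ᵥ u)) i ^ 2) * ∑ i, u i ^ 2 := by
      rw [h1]
      exact Finset.sum_mul_sq_le_sq_mul_sq _ _ _
    have h3 : (∑ i, (X *ᵥ (Xᵀ *ᵥ u)) i ^ 2) ≤ opNorm X ^ 2 * s :=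
      sumsq_mulVec_le X _
    have h4 : s * s ≤ (opNorm X ^ 2 * ∑ i, u i ^ 2) * s := by
      calc s * s = s ^ 2 := (sq s).symm
        _ ≤ (∑ i, (X *ᵥ (Xᵀ *ᵥ u)) i ^ 2) * ∑ i, u i ^ 2 := h2
        _ ≤ (opNorm X ^ 2 * s) * ∑ i, u i ^ 2 :=
            mul_le_mul_of_nonneg_right h3 (Finset.sum_nonneg fun i _ => sq_nonneg _)
        _ = (opNorm X ^ 2 * ∑ i, u i ^ 2) * s := by ring
    exact le_of_mul_le_mul_right h4 h

lemma unitary_col_sumsq {k : ℕ} (W : Matrix.unitaryGroup (Fin k) ℝ) (j : Fin k) :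
    ∑ l, ((W : Matrix (Fin k) (Fin k) ℝ) l j) ^ 2 = 1 := by
  have h := Matrix.UnitaryGroup.star_mul_self W
  have h2 := Matrix.ext_iff.mpr h j j
  simpa [Matrix.mul_apply, Matrix.star_apply, Matrix.one_apply, pow_two] using h2

lemma mrpow_eq {k : ℕ} {A : Matrix (Fin k) (Fin k) ℝ} (hA : A.IsHermitian) (t : ℝ) :
    mrpow A t = (hA.eigenvectorUnitary : Matrix (Fin k) (Fin k) ℝ) *
      Matrix.diagonal (fun i => hA.eigenvalues i ^ t) *
      star (hA.eigenvectorUnitary : Matrix (Fin k) (Fin k) ℝ) := by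
  rw [mrpow, dif_pos hA]

lemma trace_mrpow {k : ℕ} {A : Matrix (Fin k) (Fin k) ℝ} (hA : A.IsHermitian) (t : ℝ) :
    (mrpow A t).trace = ∑ i, hA.eigenvalues i ^ t := by
  rw [mrpow_eq hA, Matrix.trace_mul_comm, ← Matrix.mul_assoc,
    Matrix.UnitaryGroup.star_mul_self, Matrix.one_mul, Matrix.trace_diagonal]

lemma sum_mul_mul_right {k : ℕ} (c o : ℝ) (f : Fin k → ℝ) :
    ∑ i, c * f i * o = o * (c * ∑ i, f i) := by
  rw [← Finset.sum_mul, ← Finset.mul_sum, mul_comm]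


/-- Weight decay term bound:
`‖L^{1/(4p)} X R^{1/(4q)}‖_F² ≤ ‖X‖_op² ((1/p) tr L^{1/2} + (1/q) tr R^{1/2})`. -/
theorem stmt13 {m n : ℕ} (X : Matrix (Fin m) (Fin n) ℝ)
    {L : Matrix (Fin m) (Fin m) ℝ} {R : Matrix (Fin n) (Fin n) ℝ}
    (hL : L.PosDef) (hR : R.PosDef)
    {p q : ℝ} (hp : 0 < p) (hq : 0 < q) (hpq : 1 / p + 1 / q = 1) :
    frobNorm (mrpow L (1 / (4 * p)) * X * mrpow R (1 / (4 * q))) ^ (2 : ℕ) ≤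
      opNorm X ^ (2 : ℕ) *
        ((1 / p) * (mrpow L (1/2)).trace + (1 / q) * (mrpow R (1/2)).trace) := by
  classical
  have hLh : L.IsHermitian := hL.1
  have hRh : R.IsHermitian := hR.1
  set U := hLh.eigenvectorUnitary with hU
  set V := hRh.eigenvectorUnitary with hV
  set lam := hLh.eigenvalues with hlam
  set mu := hRh.eigenvalues with hmu
  set a : ℝ := 1 / (4 * p) with ha
  set b : ℝ := 1 / (4 * q) with hb
  set Y : Matrix (Fin m) (Fin n) ℝ :=
    star (U : Matrix (Fin m) (Fin m) ℝ) * X * (V : Matrix (Fin n) (Fin n) ℝ) with hY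
  set P : Matrix (Fin m) (Fin n) ℝ :=
    Matrix.diagonal (fun i => lam i ^ a) * Y * Matrix.diagonal (fun j => mu j ^ b) with hP
  have hUU : ∀ (Z : Matrix (Fin m) (Fin n) ℝ),
      (U : Matrix (Fin m) (Fin m) ℝ)ᴴ * ((U : Matrix (Fin m) (Fin m) ℝ) * Z) = Z := fun Z => by
    rw [← Matrix.mul_assoc, ← Matrix.star_eq_conjTranspose,
      Matrix.UnitaryGroup.star_mul_self, Matrix.one_mul]
  have hMeq : mrpow L a * X * mrpow R b
      = (U : Matrix (Fin m) (Fin m) ℝ) * P * star (V : Matrix (Fin n) (Fin n) ℝ) := by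
    rw [mrpow_eq hLh, mrpow_eq hRh, hP, hY]
    simp only [Matrix.mul_assoc]
    rfl
  have entry_sum : ∀ {m' n' : ℕ} (N : Matrix (Fin m') (Fin n') ℝ),
      (Nᴴ * N).trace = ∑ j, ∑ i, (N i j) ^ 2 := by
    intro m' n' N
    simp [Matrix.trace, Matrix.mul_apply, Matrix.diag, pow_two]
  have hMM : ((mrpow L a * X * mrpow R b)ᴴ * (mrpow L a * X * mrpow R b)).trace
      = ∑ j, ∑ i, (P i j) ^ 2 := by
    have h1 : (mrpow L a * X * mrpow R b)ᴴ * (mrpow L a * X * mrpow R b)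
        = (V : Matrix (Fin n) (Fin n) ℝ) * (Pᴴ * P) * star (V : Matrix (Fin n) (Fin n) ℝ) := by
      rw [hMeq]
      simp only [Matrix.conjTranspose_mul, Matrix.conjTranspose_conjTranspose,
        Matrix.star_eq_conjTranspose, Matrix.mul_assoc, hUU]
    rw [h1, Matrix.trace_mul_comm, ← Matrix.mul_assoc,
      Matrix.UnitaryGroup.star_mul_self, Matrix.one_mul, entry_sum]
  have hfrob : frobNorm (mrpow L a * X * mrpow R b) ^ (2:ℕ) = ∑ j, ∑ i, (P i j)^2 := by
    rw [frobNorm, Real.sq_sqrt (by rw [hMM]; positivity), hMM]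
  have hPij : ∀ i j, P i j = lam i ^ a * Y i j * mu j ^ b := by
    intro i j
    rw [hP, Matrix.mul_diagonal, Matrix.diagonal_mul]
  have hrpow2 : ∀ (x c : ℝ), 0 < x → (x ^ c) ^ (2:ℕ) = x ^ (c * 2) := by
    intro x c hx
    rw [← Real.rpow_natCast (x ^ c) 2, ← Real.rpow_mul hx.le]
    norm_num
  have hper : ∀ (i : Fin m) (j : Fin n), (P i j)^2
      ≤ ((1/p) * lam i ^ (1/2:ℝ) + (1/q) * mu j ^ (1/2:ℝ)) * Y i j ^ 2 := by
    intro i j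
    have hlpos : 0 < lam i := hL.eigenvalues_pos i
    have hmpos : 0 < mu j := hR.eigenvalues_pos j
    have e1 : (lam i ^ a) ^ (2:ℕ) * (mu j ^ b) ^ (2:ℕ)
        = (lam i ^ (1/2:ℝ)) ^ (1/p) * (mu j ^ (1/2:ℝ)) ^ (1/q) := by
      rw [hrpow2 _ _ hlpos, hrpow2 _ _ hmpos,
        ← Real.rpow_mul hlpos.le, ← Real.rpow_mul hmpos.le]
      congr 1
      · congr 1
        rw [ha]; field_simp; ring
      · congr 1
        rw [hb]; field_simp; ring
    have e2 := Real.geom_mean_le_arith_mean2_weighted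
      (by positivity : (0:ℝ) ≤ 1/p) (by positivity : (0:ℝ) ≤ 1/q)
      (Real.rpow_nonneg hlpos.le (1/2)) (Real.rpow_nonneg hmpos.le (1/2)) hpq
    calc (P i j)^2 = ((lam i ^ a) ^ (2:ℕ) * (mu j ^ b) ^ (2:ℕ)) * Y i j ^ 2 := by
          rw [hPij]; ring
      _ ≤ ((1/p) * lam i ^ (1/2:ℝ) + (1/q) * mu j ^ (1/2:ℝ)) * Y i j ^ 2 := by
          apply mul_le_mul_of_nonneg_right _ (sq_nonneg _)
          rw [e1]; exact e2
  have hcol : ∀ j, ∑ i, (Y i j)^2 ≤ opNorm X ^ 2 := by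
    intro j
    have hfun : ∀ i, Y i j = ((star (U : Matrix (Fin m) (Fin m) ℝ)) *ᵥ
        (X *ᵥ (fun l => (V : Matrix (Fin n) (Fin n) ℝ) l j))) i := by
      intro i
      rw [hY, Matrix.mul_assoc]
      simp [Matrix.mul_apply, Matrix.mulVec, dotProduct]
    calc ∑ i, (Y i j)^2
        = ∑ i, ((star (U : Matrix (Fin m) (Fin m) ℝ)) *ᵥ
            (X *ᵥ (fun l => (V : Matrix (Fin n) (Fin n) ℝ) l j))) i ^ 2 :=
          Finset.sum_congr rfl fun i _ => by rw [hfun i]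
      _ = ∑ k, (X *ᵥ (fun l => (V : Matrix (Fin n) (Fin n) ℝ) l j)) k ^ 2 :=
          sumsq_star_mulVec U _
      _ ≤ opNorm X ^ 2 * ∑ l, ((V : Matrix (Fin n) (Fin n) ℝ) l j)^2 := sumsq_mulVec_le X _
      _ = opNorm X ^ 2 := by rw [unitary_col_sumsq V j, mul_one]
  have hrow : ∀ i, ∑ j, (Y i j)^2 ≤ opNorm X ^ 2 := by
    intro i
    have hfun : ∀ j, Y i j = ((star (V : Matrix (Fin n) (Fin n) ℝ)) *ᵥ
        (Xᵀ *ᵥ (fun l => (U : Matrix (Fin m) (Fin m) ℝ) l i))) j := by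
      intro j
      rw [hY]
      simp only [Matrix.mul_apply, Matrix.mulVec, dotProduct, Matrix.star_apply,
        star_trivial, Matrix.transpose_apply, Finset.sum_mul, Finset.mul_sum]
      exact Finset.sum_congr rfl fun k _ => Finset.sum_congr rfl fun l _ => by ring
    calc ∑ j, (Y i j)^2
        = ∑ j, ((star (V : Matrix (Fin n) (Fin n) ℝ)) *ᵥ
            (Xᵀ *ᵥ (fun l => (U : Matrix (Fin m) (Fin m) ℝ) l i))) j ^ 2 :=
          Finset.sum_congr rfl fun j _ => by rw [hfun j]
      _ = ∑ k, (Xᵀ *ᵥ (fun l => (U : Matrix (Fin m) (Fin m) ℝ) l i)) k ^ 2 :=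
          sumsq_star_mulVec V _
      _ ≤ opNorm X ^ 2 * ∑ l, ((U : Matrix (Fin m) (Fin m) ℝ) l i)^2 :=
          sumsq_transpose_mulVec_le X _
      _ = opNorm X ^ 2 := by rw [unitary_col_sumsq U i, mul_one]
  rw [hfrob, trace_mrpow hLh, trace_mrpow hRh]
  have split : ∑ j, ∑ i, ((1/p) * lam i ^ (1/2:ℝ) + (1/q) * mu j ^ (1/2:ℝ)) * Y i j ^ 2
      = ∑ i, (1/p) * lam i ^ (1/2:ℝ) * (∑ j, Y i j ^ 2)
        + ∑ j, (1/q) * mu j ^ (1/2:ℝ) * (∑ i, Y i j ^ 2) := by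
    simp only [add_mul, Finset.sum_add_distrib, Finset.mul_sum]
    congr 1
    rw [Finset.sum_comm]
  calc ∑ j, ∑ i, (P i j)^2
      ≤ ∑ j, ∑ i, ((1/p) * lam i ^ (1/2:ℝ) + (1/q) * mu j ^ (1/2:ℝ)) * Y i j ^ 2 :=
        Finset.sum_le_sum fun j _ => Finset.sum_le_sum fun i _ => hper i j
    _ = ∑ i, (1/p) * lam i ^ (1/2:ℝ) * (∑ j, Y i j ^ 2)
        + ∑ j, (1/q) * mu j ^ (1/2:ℝ) * (∑ i, Y i j ^ 2) := split
    _ ≤ ∑ i, (1/p) * lam i ^ (1/2:ℝ) * opNorm X ^ 2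
        + ∑ j, (1/q) * mu j ^ (1/2:ℝ) * opNorm X ^ 2 := by
        apply add_le_add
        · exact Finset.sum_le_sum fun i _ => mul_le_mul_of_nonneg_left (hrow i)
            (mul_nonneg (by positivity) (Real.rpow_nonneg (hL.eigenvalues_pos i).le _))
        · exact Finset.sum_le_sum fun j _ => mul_le_mul_of_nonneg_left (hcol j)
            (mul_nonneg (by positivity) (Real.rpow_nonneg (hR.eigenvalues_pos j).le _))
    _ = opNorm X ^ 2 * ((1/p) * ∑ i, lam i ^ (1/2:ℝ) + (1/q) * ∑ j, mu j ^ (1/2:ℝ)) := by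
        rw [sum_mul_mul_right, sum_mul_mul_right, mul_add]


end Paper
end
end
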